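/- Let h ⊆ g₂* be an indecomposable Lie subalgebra and let E ⊆ V be an h-invariant isotropic subspace with dim E = 1. Then Ê(E) := {v ∈ V : v × e = 0 for all e ∈ E} is a 3-dimensional isotropic h-invariant subspace of V containing E. -/

import Mathlib

noncomputable section

open scoped Matrix

attribute [local instance 100] LieRing.ofAssociativeRing

abbrev V7 : Type := Fin 7 → ℝ
abbrev M7 : Type := Matrix (Fin 7) (Fin 7) ℝ
abbrev M2 : Type := Matrix (Fin 2) (Fin 2) ℝ

/-- standard basis vectors of `V7` -/
def stdB (i : Fin 7) : V7 := Pi.single i 1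

/-- the symmetric bilinear form of signature (4,3):
`⟨x,y⟩ = x₁y₅ + x₅y₁ + x₂y₆ + x₆y₂ + x₃y₇ + x₇y₃ − x₄y₄` (1-indexed). -/
def bform (x y : V7) : ℝ :=
  x 0 * y 4 + x 4 * y 0 + x 1 * y 5 + x 5 * y 1 + x 2 * y 6 + x 6 * y 2 - x 3 * y 3

/-- `e^i ∧ e^j ∧ e^k` evaluated on a triple of vectors. -/
def wedge3 (i j k : Fin 7) (u v w : V7) : ℝ :=
  u i * (v j * w k - v k * w j) - u j * (v i * w k - v k * w i)
    + u k * (v i * w j - v j * w i)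

/-- the generic 3-form
`ω₀ = √2(e¹∧e⁶∧e⁷ + e²∧e³∧e⁵) − e⁴∧(e¹∧e⁵ − e²∧e⁶ − e³∧e⁷)` (1-indexed). -/
def omega0 (u v w : V7) : ℝ :=
  Real.sqrt 2 * (wedge3 0 5 6 u v w + wedge3 1 2 4 u v w)
    - (wedge3 3 0 4 u v w - wedge3 3 1 5 u v w - wedge3 3 2 6 u v w)

/-- membership in `g₂*` -/
def inG2 (X : M7) : Prop :=
  ∀ u v w : V7,
    omega0 (X.mulVec u) v w + omega0 u (X.mulVec v) w + omega0 u v (X.mulVec w) = 0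

def InvariantUnder (h : LieSubalgebra ℝ M7) (U : Submodule ℝ V7) : Prop :=
  ∀ X ∈ h, ∀ v ∈ U, X.mulVec v ∈ U

def IsIsotropic (U : Submodule ℝ V7) : Prop :=
  ∀ u ∈ U, ∀ u' ∈ U, bform u u' = 0

def IsNondeg (U : Submodule ℝ V7) : Prop :=
  ∀ u ∈ U, (∀ u' ∈ U, bform u u' = 0) → u = 0

def IsIndecomposable (h : LieSubalgebra ℝ M7) : Prop :=
  ∀ U : Submodule ℝ V7, InvariantUnder h U → U ≠ ⊥ → U ≠ ⊤ → ¬ IsNondeg U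

def IsIrreducibleSub (h : LieSubalgebra ℝ M7) (U : Submodule ℝ V7) : Prop :=
  InvariantUnder h U ∧ U ≠ ⊥ ∧
    ∀ W : Submodule ℝ V7, InvariantUnder h W → W ≤ U → W = ⊥ ∨ W = U

/-- the socle: sum of all irreducible invariant subspaces -/
def socleV (h : LieSubalgebra ℝ M7) : Submodule ℝ V7 :=
  sSup {U | IsIrreducibleSub h U}

def sqrt2 : ℝ := Real.sqrt 2

/-- the matrix `h(A,v,u,y)` of the Type I normal form -/
def hImat (A : M2) (v : ℝ) (u y : Fin 2 → ℝ) : M7 :=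
  !![A.trace, -u 1, u 0, sqrt2 * v, 0, -y 0, -y 1;
     0, A 0 0, A 0 1, sqrt2 * u 0, y 0, 0, v;
     0, A 1 0, A 1 1, sqrt2 * u 1, y 1, -v, 0;
     0, 0, 0, 0, sqrt2 * v, sqrt2 * u 0, sqrt2 * u 1;
     0, 0, 0, 0, -A.trace, 0, 0;
     0, 0, 0, 0, u 1, -A 0 0, -A 1 0;
     0, 0, 0, 0, -u 0, -A 0 1, -A 1 1]

def hIset : Set M7 := {X | ∃ A v u y, X = hImat A v u y}

def mSet : Set M7 := {X | ∃ v u y, X = hImat 0 v u y}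

def hsSet : Set M7 := {X | ∃ A v y, X = hImat A v 0 y}

/-- a basis realizing the Type I normal form -/
def TypeIBasis (b : Module.Basis (Fin 7) ℝ V7) : Prop :=
  (∀ i j, bform (b i) (b j) = bform (stdB i) (stdB j)) ∧
  (∀ i j k, omega0 (b i) (b j) (b k) = omega0 (stdB i) (stdB j) (stdB k))

/-- the matrix of (the endomorphism given by) `X` with respect to the basis `b` -/
def matrixWrt (b : Module.Basis (Fin 7) ℝ V7) (X : M7) : M7 :=
  LinearMap.toMatrix b b X.mulVecLin

def matSet (b : Module.Basis (Fin 7) ℝ V7) (h : LieSubalgebra ℝ M7) : Set M7 :=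
  matrixWrt b '' (h : Set M7)

/-- the space `K(S)` of algebraic curvature maps with values in `S` -/
def curvSet (S : Set M7) : Set (V7 →ₗ[ℝ] V7 →ₗ[ℝ] M7) :=
  {R | (∀ x, R x x = 0) ∧ (∀ x y, R x y ∈ S) ∧
    ∀ x y z, (R x y).mulVec z + (R y z).mulVec x + (R z x).mulVec y = 0}

/-- `h` is a Berger algebra -/
def IsBerger (h : LieSubalgebra ℝ M7) : Prop :=
  h.toSubmodule =
    Submodule.span ℝ {X | ∃ R ∈ curvSet (h : Set M7), ∃ x y : V7, X = R x y}

def Cmat (a : ℝ) : M2 := !![a, -1; 1, a]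
def Smat : M2 := !![1, 1; 0, 1]
def Nmat : M2 := !![0, 1; 0, 0]
def Dmat (μ : ℝ) : M2 := !![1, 0; 0, μ]
def diagSet : Set M2 := {A | ∃ a d : ℝ, A = !![a, 0; 0, d]}
def u1Set : Set M2 := {A | ∃ a b : ℝ, A = !![a, -b; b, a]}
def b2Set : Set M2 := {A | A 1 0 = 0}
def b2hatSet : Set M2 := {A | ∃ s t : ℝ, A = s • (1 : M2) + t • Nmat}
def sLamSet (lam : ℝ) : Set M2 :=
  {A | ∃ s t : ℝ, A = s • !![lam, 0; 0, lam - 1] + t • Nmat}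
def slSet : Set M2 := {A | A.trace = 0}
def spanLine (X : M2) : Set M2 := {A | ∃ t : ℝ, A = t • X}

/-- the projection `h(A,v,u,y) ↦ A` applied to a subset of `h^I` -/
def aprojI (S : Set M7) : Set M2 := {A | ∃ v u y, hImat A v u y ∈ S}

/-- `a ⋉ m` inside `h^I` -/
def semidirI (aS : Set M2) : Set M7 :=
  {X | ∃ A ∈ aS, ∃ v u y, X = hImat A v u y}

def bformII (x y : V7) : ℝ :=
  x 0 * y 5 + x 5 * y 0 + x 1 * y 6 + x 6 * y 1 + x 2 * y 4 + x 4 * y 2 - x 3 * y 3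

def omegaII (u v w : V7) : ℝ :=
  Real.sqrt 2 * (-(wedge3 0 4 6 u v w) + wedge3 1 2 5 u v w)
    - (wedge3 3 0 5 u v w - wedge3 3 1 6 u v w - wedge3 3 2 4 u v w)

/-- a basis realizing the Type II normal form -/
def TypeIIBasis (b : Module.Basis (Fin 7) ℝ V7) : Prop :=
  (∀ i j, bform (b i) (b j) = bformII (stdB i) (stdB j)) ∧
  (∀ i j k, omega0 (b i) (b j) (b k) = omegaII (stdB i) (stdB j) (stdB k))

def sigmaMat (z : Fin 4 → ℝ) : Matrix (Fin 2) (Fin 3) ℝ :=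
  !![z 1, sqrt2 * z 2, z 3; z 0, sqrt2 * z 1, z 2]

def rhoMat (A : M2) : Matrix (Fin 3) (Fin 3) ℝ :=
  !![A 0 0 - A 1 1, -(sqrt2 * A 0 1), 0;
     -(sqrt2 * A 1 0), 0, -(sqrt2 * A 0 1);
     0, -(sqrt2 * A 1 0), -(A 0 0) + A 1 1]

/-- the matrix `h(A,z,c)` of the Type II normal form -/
def hIImat (A : M2) (z : Fin 4 → ℝ) (c : ℝ) : M7 :=
  !![A 0 0, A 0 1, z 1, sqrt2 * z 2, z 3, 0, -c;
     A 1 0, A 1 1, z 0, sqrt2 * z 1, z 2, c, 0;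
     0, 0, A 0 0 - A 1 1, -(sqrt2 * A 0 1), 0, -z 3, -z 2;
     0, 0, -(sqrt2 * A 1 0), 0, -(sqrt2 * A 0 1), sqrt2 * z 2, sqrt2 * z 1;
     0, 0, 0, -(sqrt2 * A 1 0), -(A 0 0) + A 1 1, -z 1, -z 0;
     0, 0, 0, 0, 0, -(A 0 0), -(A 1 0);
     0, 0, 0, 0, 0, -(A 0 1), -(A 1 1)]

def hIIset : Set M7 := {X | ∃ A z c, X = hIImat A z c}

def nSet : Set M7 := {X | ∃ z c, X = hIImat 0 z c}

/-- the projection `h(A,z,c) ↦ A` applied to a subset of `h^II` -/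
def aprojII (S : Set M7) : Set M2 := {A | ∃ z c, hIImat A z c ∈ S}

/-- `a ⋉ n₁` inside `h^II`, for `n₁ = {h(0,z,c) : z ∈ Z, c ∈ ℝ}` -/
def semidirII (aS : Set M2) (Z : Set (Fin 4 → ℝ)) : Set M7 :=
  {X | ∃ A ∈ aS, ∃ z ∈ Z, ∃ c : ℝ, X = hIImat A z c}

/-- `ℝ·h(A₀,z₀,0) + {h(0,z,c) : z ∈ Z, c ∈ ℝ}` inside `h^II` -/
def affSemiII (A0 : M2) (z0 : Fin 4 → ℝ) (Z : Set (Fin 4 → ℝ)) : Set M7 :=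
  {X | ∃ t : ℝ, ∃ z ∈ Z, ∃ c : ℝ, X = hIImat (t • A0) (t • z0 + z) c}

/-- the space of `z ∈ ℝ⁴` supported on the index set `s` -/
def nZ (s : Set (Fin 4)) : Set (Fin 4 → ℝ) := {z | ∀ l, l ∉ s → z l = 0}

abbrev Poly2 := MvPolynomial (Fin 2) ℝ
def Px : Poly2 := MvPolynomial.X 0
def Py : Poly2 := MvPolynomial.X 1

/-- the `GL(2,ℝ)`-action `(A·p)(x,y) = p((x,y)A)` on polynomials -/
def polyAct (A : M2) (p : Poly2) : Poly2 :=
  MvPolynomial.aeval (fun i => A 0 i • Px + A 1 i • Py) p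

/-- projective equivalence of polynomials -/
def ProjEquiv (p q : Poly2) : Prop :=
  ∃ A : M2, IsUnit A ∧ ∃ c : ℝ, c ≠ 0 ∧ polyAct A p = c • q


lemma aux_s2 : Real.sqrt 2 * Real.sqrt 2 = 2 := Real.mul_self_sqrt (by norm_num)

lemma aux_omega0_add1 (a b x y : V7) :
    omega0 (a + b) x y = omega0 a x y + omega0 b x y := by
  simp only [omega0, wedge3, Pi.add_apply]; ring

lemma aux_omega0_smul1 (c : ℝ) (a x y : V7) :
    omega0 (c • a) x y = c * omega0 a x y := by
  simp only [omega0, wedge3, Pi.smul_apply, smul_eq_mul]; ring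

lemma aux_omega0_zero1 (x y : V7) : omega0 0 x y = 0 := by
  simp only [omega0, wedge3, Pi.zero_apply]; ring

lemma aux_omega0_smul2 (c : ℝ) (a x y : V7) :
    omega0 a (c • x) y = c * omega0 a x y := by
  simp only [omega0, wedge3, Pi.smul_apply, smul_eq_mul]; ring

lemma aux_omega0_alt (a y : V7) : omega0 a a y = 0 := by
  simp only [omega0, wedge3]; ring

def KerSet (e : V7) : Submodule ℝ V7 where
  carrier := {v : V7 | ∀ i, omega0 v e (stdB i) = 0}
  add_mem' := by
    intro a b ha hb i
    rw [aux_omega0_add1, ha i, hb i]; ring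
  zero_mem' := by
    intro i; exact aux_omega0_zero1 e (stdB i)
  smul_mem' := by
    intro c a ha i
    rw [aux_omega0_smul1, ha i]; ring

lemma aux_mem_KerSet (v e : V7) : v ∈ KerSet e ↔ ∀ i, omega0 v e (stdB i) = 0 := Iff.rfl

lemma aux_om0 (v e : V7) : omega0 v e (stdB 0) = (e 6*Real.sqrt 2*v 5 - e 5*Real.sqrt 2*v 6 + e 4*v 3 - e 3*v 4) := by
  simp (config := { decide := true }) [omega0, wedge3, stdB, Pi.single_apply]; ring

lemma aux_om1 (v e : V7) : omega0 v e (stdB 1) = (-e 5*v 3 + e 4*Real.sqrt 2*v 2 + e 3*v 5 - e 2*Real.sqrt 2*v 4) := by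
  simp (config := { decide := true }) [omega0, wedge3, stdB, Pi.single_apply]; ring

lemma aux_om2 (v e : V7) : omega0 v e (stdB 2) = (-e 6*v 3 - e 4*Real.sqrt 2*v 1 + e 3*v 6 + e 1*Real.sqrt 2*v 4) := by
  simp (config := { decide := true }) [omega0, wedge3, stdB, Pi.single_apply]; ring

lemma aux_om3 (v e : V7) : omega0 v e (stdB 3) = (e 6*v 2 + e 5*v 1 - e 4*v 0 - e 2*v 6 - e 1*v 5 + e 0*v 4) := by
  simp (config := { decide := true }) [omega0, wedge3, stdB, Pi.single_apply]; ring

lemma aux_om4 (v e : V7) : omega0 v e (stdB 4) = (e 3*v 0 + e 2*Real.sqrt 2*v 1 - e 1*Real.sqrt 2*v 2 - e 0*v 3) := by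
  simp (config := { decide := true }) [omega0, wedge3, stdB, Pi.single_apply]; ring

lemma aux_om5 (v e : V7) : omega0 v e (stdB 5) = (-e 6*Real.sqrt 2*v 0 - e 3*v 1 + e 1*v 3 + e 0*Real.sqrt 2*v 6) := by
  simp (config := { decide := true }) [omega0, wedge3, stdB, Pi.single_apply]; ring

lemma aux_om6 (v e : V7) : omega0 v e (stdB 6) = (e 5*Real.sqrt 2*v 0 - e 3*v 2 + e 2*v 3 - e 0*Real.sqrt 2*v 5) := by
  simp (config := { decide := true }) [omega0, wedge3, stdB, Pi.single_apply]; ring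

lemma aux_mem_KerSet_iff (v e : V7) : v ∈ KerSet e ↔ ((e 6*Real.sqrt 2*v 5 - e 5*Real.sqrt 2*v 6 + e 4*v 3 - e 3*v 4) = 0 ∧ (-e 5*v 3 + e 4*Real.sqrt 2*v 2 + e 3*v 5 - e 2*Real.sqrt 2*v 4) = 0 ∧ (-e 6*v 3 - e 4*Real.sqrt 2*v 1 + e 3*v 6 + e 1*Real.sqrt 2*v 4) = 0 ∧ (e 6*v 2 + e 5*v 1 - e 4*v 0 - e 2*v 6 - e 1*v 5 + e 0*v 4) = 0 ∧ (e 3*v 0 + e 2*Real.sqrt 2*v 1 - e 1*Real.sqrt 2*v 2 - e 0*v 3) = 0 ∧ (-e 6*Real.sqrt 2*v 0 - e 3*v 1 + e 1*v 3 + e 0*Real.sqrt 2*v 6) = 0 ∧ (e 5*Real.sqrt 2*v 0 - e 3*v 2 + e 2*v 3 - e 0*Real.sqrt 2*v 5) = 0) := by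
  rw [aux_mem_KerSet]
  constructor
  · intro h
    exact ⟨(aux_om0 v e).symm.trans (h 0), (aux_om1 v e).symm.trans (h 1), (aux_om2 v e).symm.trans (h 2), (aux_om3 v e).symm.trans (h 3), (aux_om4 v e).symm.trans (h 4), (aux_om5 v e).symm.trans (h 5), (aux_om6 v e).symm.trans (h 6)⟩
  · rintro ⟨h0, h1, h2, h3, h4, h5, h6⟩ i
    fin_cases i
    · exact (aux_om0 v e).trans h0
    · exact (aux_om1 v e).trans h1
    · exact (aux_om2 v e).trans h2
    · exact (aux_om3 v e).trans h3
    · exact (aux_om4 v e).trans h4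
    · exact (aux_om5 v e).trans h5
    · exact (aux_om6 v e).trans h6

lemma aux_omega_expand (v e w : V7) : omega0 v e w =
    w 0 * omega0 v e (stdB 0) + w 1 * omega0 v e (stdB 1) + w 2 * omega0 v e (stdB 2) +
    w 3 * omega0 v e (stdB 3) + w 4 * omega0 v e (stdB 4) + w 5 * omega0 v e (stdB 5) +
    w 6 * omega0 v e (stdB 6) := by
  rw [aux_om0, aux_om1, aux_om2, aux_om3, aux_om4, aux_om5, aux_om6]
  simp only [omega0, wedge3]; ring

lemma aux_bform_nondeg (x : V7) (h : ∀ w, bform x w = 0) : x = 0 := by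
  have h0 := h (stdB 4); have h1 := h (stdB 5); have h2 := h (stdB 6)
  have h3 := h (stdB 3); have h4 := h (stdB 0); have h5 := h (stdB 1)
  have h6 := h (stdB 2)
  simp (config := { decide := true }) [bform, stdB, Pi.single_apply] at h0 h1 h2 h3 h4 h5 h6
  funext i
  fin_cases i <;> simp only [Pi.zero_apply]
  · exact h0
  · exact h1
  · exact h2
  · exact h3
  · exact h4
  · exact h5
  · exact h6

def aux_kv01 (e : V7) : V7 := ![(e 0 ^ 2), (0:ℝ), (0:ℝ), (e 0*e 3), (e 2*e 6 + e 1*e 5 + e 0*e 4), ((1/2)*e 2*e 3*Real.sqrt 2 + e 0*e 5), ((-1/2)*e 1*e 3*Real.sqrt 2 + e 0*e 6)]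

lemma aux_kv01_c0 (e : V7) : aux_kv01 e 0 = (e 0 ^ 2) := rfl

lemma aux_kv01_c1 (e : V7) : aux_kv01 e 1 = (0:ℝ) := rfl

lemma aux_kv01_c2 (e : V7) : aux_kv01 e 2 = (0:ℝ) := rfl

lemma aux_kv01_c3 (e : V7) : aux_kv01 e 3 = (e 0*e 3) := rfl

lemma aux_kv01_c4 (e : V7) : aux_kv01 e 4 = (e 2*e 6 + e 1*e 5 + e 0*e 4) := rfl

lemma aux_kv01_c5 (e : V7) : aux_kv01 e 5 = ((1/2)*e 2*e 3*Real.sqrt 2 + e 0*e 5) := rfl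

lemma aux_kv01_c6 (e : V7) : aux_kv01 e 6 = ((-1/2)*e 1*e 3*Real.sqrt 2 + e 0*e 6) := rfl

def aux_kv02 (e : V7) : V7 := ![(0:ℝ), (e 0 ^ 2), (0:ℝ), (e 0*e 2*Real.sqrt 2), ((1/2)*e 2*e 3*Real.sqrt 2 - e 0*e 5), (e 2 ^ 2), (-e 1*e 2 + (1/2)*e 0*e 3*Real.sqrt 2)]

lemma aux_kv02_c0 (e : V7) : aux_kv02 e 0 = (0:ℝ) := rfl

lemma aux_kv02_c1 (e : V7) : aux_kv02 e 1 = (e 0 ^ 2) := rfl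

lemma aux_kv02_c2 (e : V7) : aux_kv02 e 2 = (0:ℝ) := rfl

lemma aux_kv02_c3 (e : V7) : aux_kv02 e 3 = (e 0*e 2*Real.sqrt 2) := rfl

lemma aux_kv02_c4 (e : V7) : aux_kv02 e 4 = ((1/2)*e 2*e 3*Real.sqrt 2 - e 0*e 5) := rfl

lemma aux_kv02_c5 (e : V7) : aux_kv02 e 5 = (e 2 ^ 2) := rfl

lemma aux_kv02_c6 (e : V7) : aux_kv02 e 6 = (-e 1*e 2 + (1/2)*e 0*e 3*Real.sqrt 2) := rfl

def aux_kv03 (e : V7) : V7 := ![(0:ℝ), (0:ℝ), (e 0 ^ 2), (-e 0*e 1*Real.sqrt 2), ((-1/2)*e 1*e 3*Real.sqrt 2 - e 0*e 6), (-e 1*e 2 + (-1/2)*e 0*e 3*Real.sqrt 2), (e 1 ^ 2)]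

lemma aux_kv03_c0 (e : V7) : aux_kv03 e 0 = (0:ℝ) := rfl

lemma aux_kv03_c1 (e : V7) : aux_kv03 e 1 = (0:ℝ) := rfl

lemma aux_kv03_c2 (e : V7) : aux_kv03 e 2 = (e 0 ^ 2) := rfl

lemma aux_kv03_c3 (e : V7) : aux_kv03 e 3 = (-e 0*e 1*Real.sqrt 2) := rfl

lemma aux_kv03_c4 (e : V7) : aux_kv03 e 4 = ((-1/2)*e 1*e 3*Real.sqrt 2 - e 0*e 6) := rfl

lemma aux_kv03_c5 (e : V7) : aux_kv03 e 5 = (-e 1*e 2 + (-1/2)*e 0*e 3*Real.sqrt 2) := rfl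

lemma aux_kv03_c6 (e : V7) : aux_kv03 e 6 = (e 1 ^ 2) := rfl

lemma aux_kv01_mem (e : V7) (hq : bform e e = 0) : aux_kv01 e ∈ KerSet e := by
  have hq' : e 0 * e 4 + e 4 * e 0 + e 1 * e 5 + e 5 * e 1 + e 2 * e 6 + e 6 * e 2 - e 3 * e 3 = 0 := hq
  rw [aux_mem_KerSet_iff]
  refine ⟨?_, ?_, ?_, ?_, ?_, ?_, ?_⟩ <;>
    simp only [aux_kv01_c0, aux_kv01_c1, aux_kv01_c2, aux_kv01_c3, aux_kv01_c4, aux_kv01_c5, aux_kv01_c6]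
  · linear_combination (0:ℝ) * hq' + ((1/2)*e 2*e 3*e 6 + (1/2)*e 1*e 3*e 5) * aux_s2
  · linear_combination ((-1/2)*e 2*Real.sqrt 2) * hq' + (0:ℝ) * aux_s2
  · linear_combination ((1/2)*e 1*Real.sqrt 2) * hq' + (0:ℝ) * aux_s2
  · linear_combination (0:ℝ) * hq' + (0:ℝ) * aux_s2
  · linear_combination (0:ℝ) * hq' + (0:ℝ) * aux_s2
  · linear_combination (0:ℝ) * hq' + ((-1/2)*e 0*e 1*e 3) * aux_s2
  · linear_combination (0:ℝ) * hq' + ((-1/2)*e 0*e 2*e 3) * aux_s2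

lemma aux_kv02_mem (e : V7) (hq : bform e e = 0) : aux_kv02 e ∈ KerSet e := by
  have hq' : e 0 * e 4 + e 4 * e 0 + e 1 * e 5 + e 5 * e 1 + e 2 * e 6 + e 6 * e 2 - e 3 * e 3 = 0 := hq
  rw [aux_mem_KerSet_iff]
  refine ⟨?_, ?_, ?_, ?_, ?_, ?_, ?_⟩ <;>
    simp only [aux_kv02_c0, aux_kv02_c1, aux_kv02_c2, aux_kv02_c3, aux_kv02_c4, aux_kv02_c5, aux_kv02_c6]
  · linear_combination ((1/2)*e 2*Real.sqrt 2) * hq' + ((-1/2)*e 0*e 3*e 5) * aux_s2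
  · linear_combination (0:ℝ) * hq' + ((-1/2)*e 2 ^ 2*e 3) * aux_s2
  · linear_combination ((-1/2)*e 0*Real.sqrt 2) * hq' + ((1/2)*e 1*e 2*e 3) * aux_s2
  · linear_combination (0:ℝ) * hq' + (0:ℝ) * aux_s2
  · linear_combination (0:ℝ) * hq' + (0:ℝ) * aux_s2
  · linear_combination (0:ℝ) * hq' + ((1/2)*e 0 ^ 2*e 3) * aux_s2
  · linear_combination (0:ℝ) * hq' + (0:ℝ) * aux_s2

lemma aux_kv03_mem (e : V7) (hq : bform e e = 0) : aux_kv03 e ∈ KerSet e := by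
  have hq' : e 0 * e 4 + e 4 * e 0 + e 1 * e 5 + e 5 * e 1 + e 2 * e 6 + e 6 * e 2 - e 3 * e 3 = 0 := hq
  rw [aux_mem_KerSet_iff]
  refine ⟨?_, ?_, ?_, ?_, ?_, ?_, ?_⟩ <;>
    simp only [aux_kv03_c0, aux_kv03_c1, aux_kv03_c2, aux_kv03_c3, aux_kv03_c4, aux_kv03_c5, aux_kv03_c6]
  · linear_combination ((-1/2)*e 1*Real.sqrt 2) * hq' + ((-1/2)*e 0*e 3*e 6) * aux_s2
  · linear_combination ((1/2)*e 0*Real.sqrt 2) * hq' + ((1/2)*e 1*e 2*e 3) * aux_s2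
  · linear_combination (0:ℝ) * hq' + ((-1/2)*e 1 ^ 2*e 3) * aux_s2
  · linear_combination (0:ℝ) * hq' + (0:ℝ) * aux_s2
  · linear_combination (0:ℝ) * hq' + (0:ℝ) * aux_s2
  · linear_combination (0:ℝ) * hq' + (0:ℝ) * aux_s2
  · linear_combination (0:ℝ) * hq' + ((1/2)*e 0 ^ 2*e 3) * aux_s2

lemma aux_case0 (e : V7) (hq : bform e e = 0) (hj : e 0 ≠ 0) :
    Module.finrank ℝ (KerSet e) = 3 ∧ IsIsotropic (KerSet e) := by
  have hq' : e 0 * e 4 + e 4 * e 0 + e 1 * e 5 + e 5 * e 1 + e 2 * e 6 + e 6 * e 2 - e 3 * e 3 = 0 := hq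
  have hD4 : (2 : ℝ) * e 0 ^ 4 ≠ 0 :=
    mul_ne_zero (by norm_num) (pow_ne_zero _ hj)
  have hD : (2*e 0 ^ 4) ≠ 0 := by
    have hDeq : (2*e 0 ^ 4) = (2 : ℝ) * e 0 ^ 4 := by linear_combination (0:ℝ) * hq' + (0:ℝ) * aux_s2
    rw [hDeq]; exact hD4
  have hD0 : (e 0 ^ 2) ≠ 0 := by
    have hD0eq : (e 0 ^ 2) = e 0 ^ 2 := by linear_combination (0:ℝ) * hq' + (0:ℝ) * aux_s2
    rw [hD0eq]; exact pow_ne_zero _ hj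
  have hli : LinearIndependent ℝ ![aux_kv01 e, aux_kv02 e, aux_kv03 e] := by
    rw [Fintype.linearIndependent_iff]
    intro g hg
    rw [Fin.sum_univ_three] at hg
    simp only [Matrix.cons_val_zero, Matrix.cons_val_one, Matrix.head_cons, Matrix.cons_val_two, Matrix.tail_cons] at hg
    have e1 := congrFun hg 0
    have e2 := congrFun hg 1
    have e3 := congrFun hg 2
    simp only [Pi.add_apply, Pi.smul_apply, smul_eq_mul, Pi.zero_apply, aux_kv01_c0, aux_kv01_c1, aux_kv01_c2, aux_kv01_c3, aux_kv01_c4, aux_kv01_c5, aux_kv01_c6, aux_kv02_c0, aux_kv02_c1, aux_kv02_c2, aux_kv02_c3, aux_kv02_c4, aux_kv02_c5, aux_kv02_c6, aux_kv03_c0, aux_kv03_c1, aux_kv03_c2, aux_kv03_c3, aux_kv03_c4, aux_kv03_c5, aux_kv03_c6] at e1 e2 e3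
    intro i; fin_cases i
    · have h : g 0 * e 0 ^ 2 = 0 := by
        linear_combination e1 + (0:ℝ) * hq' + (0:ℝ) * aux_s2
      exact (mul_eq_zero.mp h).resolve_right (pow_ne_zero _ hj)
    · have h : g 1 * e 0 ^ 2 = 0 := by
        linear_combination e2 + (0:ℝ) * hq' + (0:ℝ) * aux_s2
      exact (mul_eq_zero.mp h).resolve_right (pow_ne_zero _ hj)
    · have h : g 2 * e 0 ^ 2 = 0 := by
        linear_combination e3 + (0:ℝ) * hq' + (0:ℝ) * aux_s2
      exact (mul_eq_zero.mp h).resolve_right (pow_ne_zero _ hj)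
  have hKle : Submodule.span ℝ (Set.range ![aux_kv01 e, aux_kv02 e, aux_kv03 e]) ≤ KerSet e := by
    rw [Submodule.span_le]
    rintro x ⟨i, rfl⟩
    fin_cases i
    · exact aux_kv01_mem e hq
    · exact aux_kv02_mem e hq
    · exact aux_kv03_mem e hq
  have hleK : KerSet e ≤ Submodule.span ℝ (Set.range ![aux_kv01 e, aux_kv02 e, aux_kv03 e]) := by
    intro v hv
    rw [aux_mem_KerSet_iff] at hv
    obtain ⟨h0, h1, h2, h3, h4, h5, h6⟩ := hv
    have hc3 : (e 0 ^ 2) * v 3 = (e 0*e 3) * v 0 + (e 0*e 2*Real.sqrt 2) * v 1 + (-e 0*e 1*Real.sqrt 2) * v 2 := by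
      have h : (2*e 0 ^ 4) * ((e 0 ^ 2) * v 3 - ((e 0*e 3) * v 0 + (e 0*e 2*Real.sqrt 2) * v 1 + (-e 0*e 1*Real.sqrt 2) * v 2)) = 0 := by
        linear_combination (0:ℝ) * h3 + (-2*e 0 ^ 5) * h4 + (0:ℝ) * h5 + (0:ℝ) * h6 + (0:ℝ) * hq' + (0:ℝ) * aux_s2
      rcases mul_eq_zero.mp h with h' | h'
      · exact absurd h' hD
      · linear_combination h'
    have hc4 : (e 0 ^ 2) * v 4 = (e 2*e 6 + e 1*e 5 + e 0*e 4) * v 0 + ((1/2)*e 2*e 3*Real.sqrt 2 - e 0*e 5) * v 1 + ((-1/2)*e 1*e 3*Real.sqrt 2 - e 0*e 6) * v 2 := by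
      have h : (2*e 0 ^ 4) * ((e 0 ^ 2) * v 4 - ((e 2*e 6 + e 1*e 5 + e 0*e 4) * v 0 + ((1/2)*e 2*e 3*Real.sqrt 2 - e 0*e 5) * v 1 + ((-1/2)*e 1*e 3*Real.sqrt 2 - e 0*e 6) * v 2)) = 0 := by
        linear_combination (2*e 0 ^ 5) * h3 + (0:ℝ) * h4 + (e 0 ^ 4*e 2*Real.sqrt 2) * h5 + (-e 0 ^ 4*e 1*Real.sqrt 2) * h6 + (0:ℝ) * hq' + (e 0 ^ 4*e 2*e 6*v 0 + e 0 ^ 4*e 1*e 5*v 0 - e 0 ^ 5*e 2*v 6 - e 0 ^ 5*e 1*v 5) * aux_s2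
      rcases mul_eq_zero.mp h with h' | h'
      · exact absurd h' hD
      · linear_combination h'
    have hc5 : (e 0 ^ 2) * v 5 = ((1/2)*e 2*e 3*Real.sqrt 2 + e 0*e 5) * v 0 + (e 2 ^ 2) * v 1 + (-e 1*e 2 + (-1/2)*e 0*e 3*Real.sqrt 2) * v 2 := by
      have h : (2*e 0 ^ 4) * ((e 0 ^ 2) * v 5 - (((1/2)*e 2*e 3*Real.sqrt 2 + e 0*e 5) * v 0 + (e 2 ^ 2) * v 1 + (-e 1*e 2 + (-1/2)*e 0*e 3*Real.sqrt 2) * v 2)) = 0 := by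
        linear_combination (0:ℝ) * h3 + (-e 0 ^ 4*e 2*Real.sqrt 2) * h4 + (0:ℝ) * h5 + (-e 0 ^ 5*Real.sqrt 2) * h6 + (0:ℝ) * hq' + (e 0 ^ 4*e 2 ^ 2*v 1 - e 0 ^ 4*e 1*e 2*v 2 + e 0 ^ 5*e 5*v 0 - e 0 ^ 6*v 5) * aux_s2
      rcases mul_eq_zero.mp h with h' | h'
      · exact absurd h' hD
      · linear_combination h'
    have hc6 : (e 0 ^ 2) * v 6 = ((-1/2)*e 1*e 3*Real.sqrt 2 + e 0*e 6) * v 0 + (-e 1*e 2 + (1/2)*e 0*e 3*Real.sqrt 2) * v 1 + (e 1 ^ 2) * v 2 := by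
      have h : (2*e 0 ^ 4) * ((e 0 ^ 2) * v 6 - (((-1/2)*e 1*e 3*Real.sqrt 2 + e 0*e 6) * v 0 + (-e 1*e 2 + (1/2)*e 0*e 3*Real.sqrt 2) * v 1 + (e 1 ^ 2) * v 2)) = 0 := by
        linear_combination (0:ℝ) * h3 + (e 0 ^ 4*e 1*Real.sqrt 2) * h4 + (e 0 ^ 5*Real.sqrt 2) * h5 + (0:ℝ) * h6 + (0:ℝ) * hq' + (-e 0 ^ 4*e 1*e 2*v 1 + e 0 ^ 4*e 1 ^ 2*v 2 + e 0 ^ 5*e 6*v 0 - e 0 ^ 6*v 6) * aux_s2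
      rcases mul_eq_zero.mp h with h' | h'
      · exact absurd h' hD
      · linear_combination h'
    have hveq : (e 0 ^ 2) • v = v 0 • aux_kv01 e + v 1 • aux_kv02 e + v 2 • aux_kv03 e := by
      funext i
      fin_cases i <;>
        simp only [Pi.add_apply, Pi.smul_apply, smul_eq_mul]
      · show (e 0 ^ 2) * v 0 = v 0 * aux_kv01 e 0 + v 1 * aux_kv02 e 0 + v 2 * aux_kv03 e 0
        rw [aux_kv01_c0, aux_kv02_c0, aux_kv03_c0]
        ring
      · show (e 0 ^ 2) * v 1 = v 0 * aux_kv01 e 1 + v 1 * aux_kv02 e 1 + v 2 * aux_kv03 e 1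
        rw [aux_kv01_c1, aux_kv02_c1, aux_kv03_c1]
        ring
      · show (e 0 ^ 2) * v 2 = v 0 * aux_kv01 e 2 + v 1 * aux_kv02 e 2 + v 2 * aux_kv03 e 2
        rw [aux_kv01_c2, aux_kv02_c2, aux_kv03_c2]
        ring
      · show (e 0 ^ 2) * v 3 = v 0 * aux_kv01 e 3 + v 1 * aux_kv02 e 3 + v 2 * aux_kv03 e 3
        rw [aux_kv01_c3, aux_kv02_c3, aux_kv03_c3]
        linear_combination hc3
      · show (e 0 ^ 2) * v 4 = v 0 * aux_kv01 e 4 + v 1 * aux_kv02 e 4 + v 2 * aux_kv03 e 4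
        rw [aux_kv01_c4, aux_kv02_c4, aux_kv03_c4]
        linear_combination hc4
      · show (e 0 ^ 2) * v 5 = v 0 * aux_kv01 e 5 + v 1 * aux_kv02 e 5 + v 2 * aux_kv03 e 5
        rw [aux_kv01_c5, aux_kv02_c5, aux_kv03_c5]
        linear_combination hc5
      · show (e 0 ^ 2) * v 6 = v 0 * aux_kv01 e 6 + v 1 * aux_kv02 e 6 + v 2 * aux_kv03 e 6
        rw [aux_kv01_c6, aux_kv02_c6, aux_kv03_c6]
        linear_combination hc6
    have hv2 : v = ((e 0 ^ 2))⁻¹ • (v 0 • aux_kv01 e + v 1 • aux_kv02 e + v 2 • aux_kv03 e) := by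
      rw [← hveq, smul_smul, inv_mul_cancel₀ hD0, one_smul]
    rw [hv2]
    refine Submodule.smul_mem _ _ (Submodule.add_mem _ (Submodule.add_mem _
      (Submodule.smul_mem _ _ ?_) (Submodule.smul_mem _ _ ?_)) (Submodule.smul_mem _ _ ?_))
    · exact Submodule.subset_span ⟨0, rfl⟩
    · exact Submodule.subset_span ⟨1, rfl⟩
    · exact Submodule.subset_span ⟨2, rfl⟩
  have hKeq : KerSet e = Submodule.span ℝ (Set.range ![aux_kv01 e, aux_kv02 e, aux_kv03 e]) :=
    le_antisymm hleK hKle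
  constructor
  · rw [hKeq, finrank_span_eq_card hli]; simp
  · intro x hx y hy
    rw [hKeq, Submodule.mem_span_range_iff_exists_fun] at hx hy
    obtain ⟨c, hc⟩ := hx
    obtain ⟨d, hd⟩ := hy
    rw [Fin.sum_univ_three] at hc hd
    simp only [Matrix.cons_val_zero, Matrix.cons_val_one, Matrix.head_cons, Matrix.cons_val_two, Matrix.tail_cons] at hc hd
    rw [← hc, ← hd]
    simp only [bform, Pi.add_apply, Pi.smul_apply, smul_eq_mul, aux_kv01_c0, aux_kv01_c1, aux_kv01_c2, aux_kv01_c3, aux_kv01_c4, aux_kv01_c5, aux_kv01_c6, aux_kv02_c0, aux_kv02_c1, aux_kv02_c2, aux_kv02_c3, aux_kv02_c4, aux_kv02_c5, aux_kv02_c6, aux_kv03_c0, aux_kv03_c1, aux_kv03_c2, aux_kv03_c3, aux_kv03_c4, aux_kv03_c5, aux_kv03_c6]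
    linear_combination (e 0 ^ 2*c 0*d 0) * hq' + (-e 0 ^ 2*e 2 ^ 2*c 1*d 1 + e 0 ^ 2*e 1*e 2*c 2*d 1 + e 0 ^ 2*e 1*e 2*c 1*d 2 - e 0 ^ 2*e 1 ^ 2*c 2*d 2) * aux_s2

def aux_kv11 (e : V7) : V7 := ![(e 1 ^ 2), (0:ℝ), ((1/2)*e 1*e 3*Real.sqrt 2 - e 0*e 6), (e 1*e 6*Real.sqrt 2), (e 6 ^ 2), ((1/2)*e 3*e 6*Real.sqrt 2 - e 1*e 4), (0:ℝ)]

lemma aux_kv11_c0 (e : V7) : aux_kv11 e 0 = (e 1 ^ 2) := rfl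

lemma aux_kv11_c1 (e : V7) : aux_kv11 e 1 = (0:ℝ) := rfl

lemma aux_kv11_c2 (e : V7) : aux_kv11 e 2 = ((1/2)*e 1*e 3*Real.sqrt 2 - e 0*e 6) := rfl

lemma aux_kv11_c3 (e : V7) : aux_kv11 e 3 = (e 1*e 6*Real.sqrt 2) := rfl

lemma aux_kv11_c4 (e : V7) : aux_kv11 e 4 = (e 6 ^ 2) := rfl

lemma aux_kv11_c5 (e : V7) : aux_kv11 e 5 = ((1/2)*e 3*e 6*Real.sqrt 2 - e 1*e 4) := rfl

lemma aux_kv11_c6 (e : V7) : aux_kv11 e 6 = (0:ℝ) := rfl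

def aux_kv12 (e : V7) : V7 := ![(0:ℝ), (e 1 ^ 2), (e 1*e 2 + (-1/2)*e 0*e 3*Real.sqrt 2), (e 1*e 3), ((1/2)*e 3*e 6*Real.sqrt 2 + e 1*e 4), (e 2*e 6 + e 1*e 5 + e 0*e 4), (0:ℝ)]

lemma aux_kv12_c0 (e : V7) : aux_kv12 e 0 = (0:ℝ) := rfl

lemma aux_kv12_c1 (e : V7) : aux_kv12 e 1 = (e 1 ^ 2) := rfl

lemma aux_kv12_c2 (e : V7) : aux_kv12 e 2 = (e 1*e 2 + (-1/2)*e 0*e 3*Real.sqrt 2) := rfl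

lemma aux_kv12_c3 (e : V7) : aux_kv12 e 3 = (e 1*e 3) := rfl

lemma aux_kv12_c4 (e : V7) : aux_kv12 e 4 = ((1/2)*e 3*e 6*Real.sqrt 2 + e 1*e 4) := rfl

lemma aux_kv12_c5 (e : V7) : aux_kv12 e 5 = (e 2*e 6 + e 1*e 5 + e 0*e 4) := rfl

lemma aux_kv12_c6 (e : V7) : aux_kv12 e 6 = (0:ℝ) := rfl

def aux_kv13 (e : V7) : V7 := ![(0:ℝ), (0:ℝ), (e 0 ^ 2), (-e 0*e 1*Real.sqrt 2), ((-1/2)*e 1*e 3*Real.sqrt 2 - e 0*e 6), (-e 1*e 2 + (-1/2)*e 0*e 3*Real.sqrt 2), (e 1 ^ 2)]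

lemma aux_kv13_c0 (e : V7) : aux_kv13 e 0 = (0:ℝ) := rfl

lemma aux_kv13_c1 (e : V7) : aux_kv13 e 1 = (0:ℝ) := rfl

lemma aux_kv13_c2 (e : V7) : aux_kv13 e 2 = (e 0 ^ 2) := rfl

lemma aux_kv13_c3 (e : V7) : aux_kv13 e 3 = (-e 0*e 1*Real.sqrt 2) := rfl

lemma aux_kv13_c4 (e : V7) : aux_kv13 e 4 = ((-1/2)*e 1*e 3*Real.sqrt 2 - e 0*e 6) := rfl

lemma aux_kv13_c5 (e : V7) : aux_kv13 e 5 = (-e 1*e 2 + (-1/2)*e 0*e 3*Real.sqrt 2) := rfl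

lemma aux_kv13_c6 (e : V7) : aux_kv13 e 6 = (e 1 ^ 2) := rfl

lemma aux_kv11_mem (e : V7) (hq : bform e e = 0) : aux_kv11 e ∈ KerSet e := by
  have hq' : e 0 * e 4 + e 4 * e 0 + e 1 * e 5 + e 5 * e 1 + e 2 * e 6 + e 6 * e 2 - e 3 * e 3 = 0 := hq
  rw [aux_mem_KerSet_iff]
  refine ⟨?_, ?_, ?_, ?_, ?_, ?_, ?_⟩ <;>
    simp only [aux_kv11_c0, aux_kv11_c1, aux_kv11_c2, aux_kv11_c3, aux_kv11_c4, aux_kv11_c5, aux_kv11_c6]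
  · linear_combination (0:ℝ) * hq' + ((1/2)*e 3*e 6 ^ 2) * aux_s2
  · linear_combination ((-1/2)*e 6*Real.sqrt 2) * hq' + ((1/2)*e 1*e 3*e 4) * aux_s2
  · linear_combination (0:ℝ) * hq' + (0:ℝ) * aux_s2
  · linear_combination (0:ℝ) * hq' + (0:ℝ) * aux_s2
  · linear_combination (0:ℝ) * hq' + ((-1/2)*e 1 ^ 2*e 3) * aux_s2
  · linear_combination (0:ℝ) * hq' + (0:ℝ) * aux_s2
  · linear_combination ((1/2)*e 1*Real.sqrt 2) * hq' + ((-1/2)*e 0*e 3*e 6) * aux_s2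

lemma aux_kv12_mem (e : V7) (hq : bform e e = 0) : aux_kv12 e ∈ KerSet e := by
  have hq' : e 0 * e 4 + e 4 * e 0 + e 1 * e 5 + e 5 * e 1 + e 2 * e 6 + e 6 * e 2 - e 3 * e 3 = 0 := hq
  rw [aux_mem_KerSet_iff]
  refine ⟨?_, ?_, ?_, ?_, ?_, ?_, ?_⟩ <;>
    simp only [aux_kv12_c0, aux_kv12_c1, aux_kv12_c2, aux_kv12_c3, aux_kv12_c4, aux_kv12_c5, aux_kv12_c6]
  · linear_combination ((1/2)*e 6*Real.sqrt 2) * hq' + (0:ℝ) * aux_s2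
  · linear_combination (0:ℝ) * hq' + ((-1/2)*e 2*e 3*e 6 + (-1/2)*e 0*e 3*e 4) * aux_s2
  · linear_combination (0:ℝ) * hq' + ((1/2)*e 1*e 3*e 6) * aux_s2
  · linear_combination (0:ℝ) * hq' + (0:ℝ) * aux_s2
  · linear_combination (0:ℝ) * hq' + ((1/2)*e 0*e 1*e 3) * aux_s2
  · linear_combination (0:ℝ) * hq' + (0:ℝ) * aux_s2
  · linear_combination ((-1/2)*e 0*Real.sqrt 2) * hq' + (0:ℝ) * aux_s2

lemma aux_kv13_mem (e : V7) (hq : bform e e = 0) : aux_kv13 e ∈ KerSet e := by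
  have hq' : e 0 * e 4 + e 4 * e 0 + e 1 * e 5 + e 5 * e 1 + e 2 * e 6 + e 6 * e 2 - e 3 * e 3 = 0 := hq
  rw [aux_mem_KerSet_iff]
  refine ⟨?_, ?_, ?_, ?_, ?_, ?_, ?_⟩ <;>
    simp only [aux_kv13_c0, aux_kv13_c1, aux_kv13_c2, aux_kv13_c3, aux_kv13_c4, aux_kv13_c5, aux_kv13_c6]
  · linear_combination ((-1/2)*e 1*Real.sqrt 2) * hq' + ((-1/2)*e 0*e 3*e 6) * aux_s2
  · linear_combination ((1/2)*e 0*Real.sqrt 2) * hq' + ((1/2)*e 1*e 2*e 3) * aux_s2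
  · linear_combination (0:ℝ) * hq' + ((-1/2)*e 1 ^ 2*e 3) * aux_s2
  · linear_combination (0:ℝ) * hq' + (0:ℝ) * aux_s2
  · linear_combination (0:ℝ) * hq' + (0:ℝ) * aux_s2
  · linear_combination (0:ℝ) * hq' + (0:ℝ) * aux_s2
  · linear_combination (0:ℝ) * hq' + ((1/2)*e 0 ^ 2*e 3) * aux_s2

lemma aux_case1 (e : V7) (hq : bform e e = 0) (hj : e 1 ≠ 0) :
    Module.finrank ℝ (KerSet e) = 3 ∧ IsIsotropic (KerSet e) := by
  have hq' : e 0 * e 4 + e 4 * e 0 + e 1 * e 5 + e 5 * e 1 + e 2 * e 6 + e 6 * e 2 - e 3 * e 3 = 0 := hq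
  have hD4 : (2 : ℝ) * e 1 ^ 4 ≠ 0 :=
    mul_ne_zero (by norm_num) (pow_ne_zero _ hj)
  have hD : (2*e 1 ^ 4) ≠ 0 := by
    have hDeq : (2*e 1 ^ 4) = (2 : ℝ) * e 1 ^ 4 := by linear_combination (0:ℝ) * hq' + (0:ℝ) * aux_s2
    rw [hDeq]; exact hD4
  have hD0 : (e 1 ^ 2) ≠ 0 := by
    have hD0eq : (e 1 ^ 2) = e 1 ^ 2 := by linear_combination (0:ℝ) * hq' + (0:ℝ) * aux_s2
    rw [hD0eq]; exact pow_ne_zero _ hj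
  have hli : LinearIndependent ℝ ![aux_kv11 e, aux_kv12 e, aux_kv13 e] := by
    rw [Fintype.linearIndependent_iff]
    intro g hg
    rw [Fin.sum_univ_three] at hg
    simp only [Matrix.cons_val_zero, Matrix.cons_val_one, Matrix.head_cons, Matrix.cons_val_two, Matrix.tail_cons] at hg
    have e1 := congrFun hg 0
    have e2 := congrFun hg 1
    have e3 := congrFun hg 6
    simp only [Pi.add_apply, Pi.smul_apply, smul_eq_mul, Pi.zero_apply, aux_kv11_c0, aux_kv11_c1, aux_kv11_c2, aux_kv11_c3, aux_kv11_c4, aux_kv11_c5, aux_kv11_c6, aux_kv12_c0, aux_kv12_c1, aux_kv12_c2, aux_kv12_c3, aux_kv12_c4, aux_kv12_c5, aux_kv12_c6, aux_kv13_c0, aux_kv13_c1, aux_kv13_c2, aux_kv13_c3, aux_kv13_c4, aux_kv13_c5, aux_kv13_c6] at e1 e2 e3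
    intro i; fin_cases i
    · have h : g 0 * e 1 ^ 2 = 0 := by
        linear_combination e1 + (0:ℝ) * hq' + (0:ℝ) * aux_s2
      exact (mul_eq_zero.mp h).resolve_right (pow_ne_zero _ hj)
    · have h : g 1 * e 1 ^ 2 = 0 := by
        linear_combination e2 + (0:ℝ) * hq' + (0:ℝ) * aux_s2
      exact (mul_eq_zero.mp h).resolve_right (pow_ne_zero _ hj)
    · have h : g 2 * e 1 ^ 2 = 0 := by
        linear_combination e3 + (0:ℝ) * hq' + (0:ℝ) * aux_s2
      exact (mul_eq_zero.mp h).resolve_right (pow_ne_zero _ hj)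
  have hKle : Submodule.span ℝ (Set.range ![aux_kv11 e, aux_kv12 e, aux_kv13 e]) ≤ KerSet e := by
    rw [Submodule.span_le]
    rintro x ⟨i, rfl⟩
    fin_cases i
    · exact aux_kv11_mem e hq
    · exact aux_kv12_mem e hq
    · exact aux_kv13_mem e hq
  have hleK : KerSet e ≤ Submodule.span ℝ (Set.range ![aux_kv11 e, aux_kv12 e, aux_kv13 e]) := by
    intro v hv
    rw [aux_mem_KerSet_iff] at hv
    obtain ⟨h0, h1, h2, h3, h4, h5, h6⟩ := hv
    have hc2 : (e 1 ^ 2) * v 2 = ((1/2)*e 1*e 3*Real.sqrt 2 - e 0*e 6) * v 0 + (e 1*e 2 + (-1/2)*e 0*e 3*Real.sqrt 2) * v 1 + (e 0 ^ 2) * v 6 := by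
      have h : (2*e 1 ^ 4) * ((e 1 ^ 2) * v 2 - (((1/2)*e 1*e 3*Real.sqrt 2 - e 0*e 6) * v 0 + (e 1*e 2 + (-1/2)*e 0*e 3*Real.sqrt 2) * v 1 + (e 0 ^ 2) * v 6)) = 0 := by
        linear_combination (0:ℝ) * h2 + (0:ℝ) * h3 + (-e 1 ^ 5*Real.sqrt 2) * h4 + (-e 0*e 1 ^ 4*Real.sqrt 2) * h5 + (0:ℝ) * hq' + (e 1 ^ 5*e 2*v 1 - e 1 ^ 6*v 2 - e 0*e 1 ^ 4*e 6*v 0 + e 0 ^ 2*e 1 ^ 4*v 6) * aux_s2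
      rcases mul_eq_zero.mp h with h' | h'
      · exact absurd h' hD
      · linear_combination h'
    have hc3 : (e 1 ^ 2) * v 3 = (e 1*e 6*Real.sqrt 2) * v 0 + (e 1*e 3) * v 1 + (-e 0*e 1*Real.sqrt 2) * v 6 := by
      have h : (2*e 1 ^ 4) * ((e 1 ^ 2) * v 3 - ((e 1*e 6*Real.sqrt 2) * v 0 + (e 1*e 3) * v 1 + (-e 0*e 1*Real.sqrt 2) * v 6)) = 0 := by
        linear_combination (0:ℝ) * h2 + (0:ℝ) * h3 + (0:ℝ) * h4 + (2*e 1 ^ 5) * h5 + (0:ℝ) * hq' + (0:ℝ) * aux_s2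
      rcases mul_eq_zero.mp h with h' | h'
      · exact absurd h' hD
      · linear_combination h'
    have hc4 : (e 1 ^ 2) * v 4 = (e 6 ^ 2) * v 0 + ((1/2)*e 3*e 6*Real.sqrt 2 + e 1*e 4) * v 1 + ((-1/2)*e 1*e 3*Real.sqrt 2 - e 0*e 6) * v 6 := by
      have h : (2*e 1 ^ 4) * ((e 1 ^ 2) * v 4 - ((e 6 ^ 2) * v 0 + ((1/2)*e 3*e 6*Real.sqrt 2 + e 1*e 4) * v 1 + ((-1/2)*e 1*e 3*Real.sqrt 2 - e 0*e 6) * v 6)) = 0 := by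
        linear_combination (e 1 ^ 5*Real.sqrt 2) * h2 + (0:ℝ) * h3 + (0:ℝ) * h4 + (e 1 ^ 4*e 6*Real.sqrt 2) * h5 + (0:ℝ) * hq' + (e 1 ^ 4*e 6 ^ 2*v 0 + e 1 ^ 5*e 4*v 1 - e 1 ^ 6*v 4 - e 0*e 1 ^ 4*e 6*v 6) * aux_s2
      rcases mul_eq_zero.mp h with h' | h'
      · exact absurd h' hD
      · linear_combination h'
    have hc5 : (e 1 ^ 2) * v 5 = ((1/2)*e 3*e 6*Real.sqrt 2 - e 1*e 4) * v 0 + (e 2*e 6 + e 1*e 5 + e 0*e 4) * v 1 + (-e 1*e 2 + (-1/2)*e 0*e 3*Real.sqrt 2) * v 6 := by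
      have h : (2*e 1 ^ 4) * ((e 1 ^ 2) * v 5 - (((1/2)*e 3*e 6*Real.sqrt 2 - e 1*e 4) * v 0 + (e 2*e 6 + e 1*e 5 + e 0*e 4) * v 1 + (-e 1*e 2 + (-1/2)*e 0*e 3*Real.sqrt 2) * v 6)) = 0 := by
        linear_combination (e 0*e 1 ^ 4*Real.sqrt 2) * h2 + (-2*e 1 ^ 5) * h3 + (-e 1 ^ 4*e 6*Real.sqrt 2) * h4 + (0:ℝ) * h5 + (0:ℝ) * hq' + (e 1 ^ 4*e 2*e 6*v 1 - e 1 ^ 5*e 6*v 2 + e 0*e 1 ^ 4*e 4*v 1 - e 0*e 1 ^ 5*v 4) * aux_s2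
      rcases mul_eq_zero.mp h with h' | h'
      · exact absurd h' hD
      · linear_combination h'
    have hveq : (e 1 ^ 2) • v = v 0 • aux_kv11 e + v 1 • aux_kv12 e + v 6 • aux_kv13 e := by
      funext i
      fin_cases i <;>
        simp only [Pi.add_apply, Pi.smul_apply, smul_eq_mul]
      · show (e 1 ^ 2) * v 0 = v 0 * aux_kv11 e 0 + v 1 * aux_kv12 e 0 + v 6 * aux_kv13 e 0
        rw [aux_kv11_c0, aux_kv12_c0, aux_kv13_c0]
        ring
      · show (e 1 ^ 2) * v 1 = v 0 * aux_kv11 e 1 + v 1 * aux_kv12 e 1 + v 6 * aux_kv13 e 1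
        rw [aux_kv11_c1, aux_kv12_c1, aux_kv13_c1]
        ring
      · show (e 1 ^ 2) * v 2 = v 0 * aux_kv11 e 2 + v 1 * aux_kv12 e 2 + v 6 * aux_kv13 e 2
        rw [aux_kv11_c2, aux_kv12_c2, aux_kv13_c2]
        linear_combination hc2
      · show (e 1 ^ 2) * v 3 = v 0 * aux_kv11 e 3 + v 1 * aux_kv12 e 3 + v 6 * aux_kv13 e 3
        rw [aux_kv11_c3, aux_kv12_c3, aux_kv13_c3]
        linear_combination hc3
      · show (e 1 ^ 2) * v 4 = v 0 * aux_kv11 e 4 + v 1 * aux_kv12 e 4 + v 6 * aux_kv13 e 4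
        rw [aux_kv11_c4, aux_kv12_c4, aux_kv13_c4]
        linear_combination hc4
      · show (e 1 ^ 2) * v 5 = v 0 * aux_kv11 e 5 + v 1 * aux_kv12 e 5 + v 6 * aux_kv13 e 5
        rw [aux_kv11_c5, aux_kv12_c5, aux_kv13_c5]
        linear_combination hc5
      · show (e 1 ^ 2) * v 6 = v 0 * aux_kv11 e 6 + v 1 * aux_kv12 e 6 + v 6 * aux_kv13 e 6
        rw [aux_kv11_c6, aux_kv12_c6, aux_kv13_c6]
        ring
    have hv2 : v = ((e 1 ^ 2))⁻¹ • (v 0 • aux_kv11 e + v 1 • aux_kv12 e + v 6 • aux_kv13 e) := by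
      rw [← hveq, smul_smul, inv_mul_cancel₀ hD0, one_smul]
    rw [hv2]
    refine Submodule.smul_mem _ _ (Submodule.add_mem _ (Submodule.add_mem _
      (Submodule.smul_mem _ _ ?_) (Submodule.smul_mem _ _ ?_)) (Submodule.smul_mem _ _ ?_))
    · exact Submodule.subset_span ⟨0, rfl⟩
    · exact Submodule.subset_span ⟨1, rfl⟩
    · exact Submodule.subset_span ⟨2, rfl⟩
  have hKeq : KerSet e = Submodule.span ℝ (Set.range ![aux_kv11 e, aux_kv12 e, aux_kv13 e]) :=
    le_antisymm hleK hKle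
  constructor
  · rw [hKeq, finrank_span_eq_card hli]; simp
  · intro x hx y hy
    rw [hKeq, Submodule.mem_span_range_iff_exists_fun] at hx hy
    obtain ⟨c, hc⟩ := hx
    obtain ⟨d, hd⟩ := hy
    rw [Fin.sum_univ_three] at hc hd
    simp only [Matrix.cons_val_zero, Matrix.cons_val_one, Matrix.head_cons, Matrix.cons_val_two, Matrix.tail_cons] at hc hd
    rw [← hc, ← hd]
    simp only [bform, Pi.add_apply, Pi.smul_apply, smul_eq_mul, aux_kv11_c0, aux_kv11_c1, aux_kv11_c2, aux_kv11_c3, aux_kv11_c4, aux_kv11_c5, aux_kv11_c6, aux_kv12_c0, aux_kv12_c1, aux_kv12_c2, aux_kv12_c3, aux_kv12_c4, aux_kv12_c5, aux_kv12_c6, aux_kv13_c0, aux_kv13_c1, aux_kv13_c2, aux_kv13_c3, aux_kv13_c4, aux_kv13_c5, aux_kv13_c6]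
    linear_combination (e 1 ^ 2*c 1*d 1) * hq' + (-e 1 ^ 2*e 6 ^ 2*c 0*d 0 + e 0*e 1 ^ 2*e 6*c 2*d 0 + e 0*e 1 ^ 2*e 6*c 0*d 2 - e 0 ^ 2*e 1 ^ 2*c 2*d 2) * aux_s2

def aux_kv21 (e : V7) : V7 := ![(e 2 ^ 2), ((-1/2)*e 2*e 3*Real.sqrt 2 - e 0*e 5), (0:ℝ), (-e 2*e 5*Real.sqrt 2), (e 5 ^ 2), (0:ℝ), ((-1/2)*e 3*e 5*Real.sqrt 2 - e 2*e 4)]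

lemma aux_kv21_c0 (e : V7) : aux_kv21 e 0 = (e 2 ^ 2) := rfl

lemma aux_kv21_c1 (e : V7) : aux_kv21 e 1 = ((-1/2)*e 2*e 3*Real.sqrt 2 - e 0*e 5) := rfl

lemma aux_kv21_c2 (e : V7) : aux_kv21 e 2 = (0:ℝ) := rfl

lemma aux_kv21_c3 (e : V7) : aux_kv21 e 3 = (-e 2*e 5*Real.sqrt 2) := rfl

lemma aux_kv21_c4 (e : V7) : aux_kv21 e 4 = (e 5 ^ 2) := rfl

lemma aux_kv21_c5 (e : V7) : aux_kv21 e 5 = (0:ℝ) := rfl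

lemma aux_kv21_c6 (e : V7) : aux_kv21 e 6 = ((-1/2)*e 3*e 5*Real.sqrt 2 - e 2*e 4) := rfl

def aux_kv22 (e : V7) : V7 := ![(0:ℝ), (e 1*e 2 + (1/2)*e 0*e 3*Real.sqrt 2), (e 2 ^ 2), (e 2*e 3), ((-1/2)*e 3*e 5*Real.sqrt 2 + e 2*e 4), (0:ℝ), (e 2*e 6 + e 1*e 5 + e 0*e 4)]

lemma aux_kv22_c0 (e : V7) : aux_kv22 e 0 = (0:ℝ) := rfl

lemma aux_kv22_c1 (e : V7) : aux_kv22 e 1 = (e 1*e 2 + (1/2)*e 0*e 3*Real.sqrt 2) := rfl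

lemma aux_kv22_c2 (e : V7) : aux_kv22 e 2 = (e 2 ^ 2) := rfl

lemma aux_kv22_c3 (e : V7) : aux_kv22 e 3 = (e 2*e 3) := rfl

lemma aux_kv22_c4 (e : V7) : aux_kv22 e 4 = ((-1/2)*e 3*e 5*Real.sqrt 2 + e 2*e 4) := rfl

lemma aux_kv22_c5 (e : V7) : aux_kv22 e 5 = (0:ℝ) := rfl

lemma aux_kv22_c6 (e : V7) : aux_kv22 e 6 = (e 2*e 6 + e 1*e 5 + e 0*e 4) := rfl

def aux_kv23 (e : V7) : V7 := ![(0:ℝ), (e 0 ^ 2), (0:ℝ), (e 0*e 2*Real.sqrt 2), ((1/2)*e 2*e 3*Real.sqrt 2 - e 0*e 5), (e 2 ^ 2), (-e 1*e 2 + (1/2)*e 0*e 3*Real.sqrt 2)]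

lemma aux_kv23_c0 (e : V7) : aux_kv23 e 0 = (0:ℝ) := rfl

lemma aux_kv23_c1 (e : V7) : aux_kv23 e 1 = (e 0 ^ 2) := rfl

lemma aux_kv23_c2 (e : V7) : aux_kv23 e 2 = (0:ℝ) := rfl

lemma aux_kv23_c3 (e : V7) : aux_kv23 e 3 = (e 0*e 2*Real.sqrt 2) := rfl

lemma aux_kv23_c4 (e : V7) : aux_kv23 e 4 = ((1/2)*e 2*e 3*Real.sqrt 2 - e 0*e 5) := rfl

lemma aux_kv23_c5 (e : V7) : aux_kv23 e 5 = (e 2 ^ 2) := rfl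

lemma aux_kv23_c6 (e : V7) : aux_kv23 e 6 = (-e 1*e 2 + (1/2)*e 0*e 3*Real.sqrt 2) := rfl

lemma aux_kv21_mem (e : V7) (hq : bform e e = 0) : aux_kv21 e ∈ KerSet e := by
  have hq' : e 0 * e 4 + e 4 * e 0 + e 1 * e 5 + e 5 * e 1 + e 2 * e 6 + e 6 * e 2 - e 3 * e 3 = 0 := hq
  rw [aux_mem_KerSet_iff]
  refine ⟨?_, ?_, ?_, ?_, ?_, ?_, ?_⟩ <;>
    simp only [aux_kv21_c0, aux_kv21_c1, aux_kv21_c2, aux_kv21_c3, aux_kv21_c4, aux_kv21_c5, aux_kv21_c6]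
  · linear_combination (0:ℝ) * hq' + ((1/2)*e 3*e 5 ^ 2) * aux_s2
  · linear_combination (0:ℝ) * hq' + (0:ℝ) * aux_s2
  · linear_combination ((1/2)*e 5*Real.sqrt 2) * hq' + ((1/2)*e 2*e 3*e 4) * aux_s2
  · linear_combination (0:ℝ) * hq' + (0:ℝ) * aux_s2
  · linear_combination (0:ℝ) * hq' + ((-1/2)*e 2 ^ 2*e 3) * aux_s2
  · linear_combination ((-1/2)*e 2*Real.sqrt 2) * hq' + ((-1/2)*e 0*e 3*e 5) * aux_s2
  · linear_combination (0:ℝ) * hq' + (0:ℝ) * aux_s2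

lemma aux_kv22_mem (e : V7) (hq : bform e e = 0) : aux_kv22 e ∈ KerSet e := by
  have hq' : e 0 * e 4 + e 4 * e 0 + e 1 * e 5 + e 5 * e 1 + e 2 * e 6 + e 6 * e 2 - e 3 * e 3 = 0 := hq
  rw [aux_mem_KerSet_iff]
  refine ⟨?_, ?_, ?_, ?_, ?_, ?_, ?_⟩ <;>
    simp only [aux_kv22_c0, aux_kv22_c1, aux_kv22_c2, aux_kv22_c3, aux_kv22_c4, aux_kv22_c5, aux_kv22_c6]
  · linear_combination ((-1/2)*e 5*Real.sqrt 2) * hq' + (0:ℝ) * aux_s2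
  · linear_combination (0:ℝ) * hq' + ((1/2)*e 2*e 3*e 5) * aux_s2
  · linear_combination (0:ℝ) * hq' + ((-1/2)*e 1*e 3*e 5 + (-1/2)*e 0*e 3*e 4) * aux_s2
  · linear_combination (0:ℝ) * hq' + (0:ℝ) * aux_s2
  · linear_combination (0:ℝ) * hq' + ((1/2)*e 0*e 2*e 3) * aux_s2
  · linear_combination ((1/2)*e 0*Real.sqrt 2) * hq' + (0:ℝ) * aux_s2
  · linear_combination (0:ℝ) * hq' + (0:ℝ) * aux_s2

lemma aux_kv23_mem (e : V7) (hq : bform e e = 0) : aux_kv23 e ∈ KerSet e := by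
  have hq' : e 0 * e 4 + e 4 * e 0 + e 1 * e 5 + e 5 * e 1 + e 2 * e 6 + e 6 * e 2 - e 3 * e 3 = 0 := hq
  rw [aux_mem_KerSet_iff]
  refine ⟨?_, ?_, ?_, ?_, ?_, ?_, ?_⟩ <;>
    simp only [aux_kv23_c0, aux_kv23_c1, aux_kv23_c2, aux_kv23_c3, aux_kv23_c4, aux_kv23_c5, aux_kv23_c6]
  · linear_combination ((1/2)*e 2*Real.sqrt 2) * hq' + ((-1/2)*e 0*e 3*e 5) * aux_s2
  · linear_combination (0:ℝ) * hq' + ((-1/2)*e 2 ^ 2*e 3) * aux_s2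
  · linear_combination ((-1/2)*e 0*Real.sqrt 2) * hq' + ((1/2)*e 1*e 2*e 3) * aux_s2
  · linear_combination (0:ℝ) * hq' + (0:ℝ) * aux_s2
  · linear_combination (0:ℝ) * hq' + (0:ℝ) * aux_s2
  · linear_combination (0:ℝ) * hq' + ((1/2)*e 0 ^ 2*e 3) * aux_s2
  · linear_combination (0:ℝ) * hq' + (0:ℝ) * aux_s2

lemma aux_case2 (e : V7) (hq : bform e e = 0) (hj : e 2 ≠ 0) :
    Module.finrank ℝ (KerSet e) = 3 ∧ IsIsotropic (KerSet e) := by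
  have hq' : e 0 * e 4 + e 4 * e 0 + e 1 * e 5 + e 5 * e 1 + e 2 * e 6 + e 6 * e 2 - e 3 * e 3 = 0 := hq
  have hD4 : (2 : ℝ) * e 2 ^ 4 ≠ 0 :=
    mul_ne_zero (by norm_num) (pow_ne_zero _ hj)
  have hD : (2*e 2 ^ 4) ≠ 0 := by
    have hDeq : (2*e 2 ^ 4) = (2 : ℝ) * e 2 ^ 4 := by linear_combination (0:ℝ) * hq' + (0:ℝ) * aux_s2
    rw [hDeq]; exact hD4
  have hD0 : (e 2 ^ 2) ≠ 0 := by
    have hD0eq : (e 2 ^ 2) = e 2 ^ 2 := by linear_combination (0:ℝ) * hq' + (0:ℝ) * aux_s2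
    rw [hD0eq]; exact pow_ne_zero _ hj
  have hli : LinearIndependent ℝ ![aux_kv21 e, aux_kv22 e, aux_kv23 e] := by
    rw [Fintype.linearIndependent_iff]
    intro g hg
    rw [Fin.sum_univ_three] at hg
    simp only [Matrix.cons_val_zero, Matrix.cons_val_one, Matrix.head_cons, Matrix.cons_val_two, Matrix.tail_cons] at hg
    have e1 := congrFun hg 0
    have e2 := congrFun hg 2
    have e3 := congrFun hg 5
    simp only [Pi.add_apply, Pi.smul_apply, smul_eq_mul, Pi.zero_apply, aux_kv21_c0, aux_kv21_c1, aux_kv21_c2, aux_kv21_c3, aux_kv21_c4, aux_kv21_c5, aux_kv21_c6, aux_kv22_c0, aux_kv22_c1, aux_kv22_c2, aux_kv22_c3, aux_kv22_c4, aux_kv22_c5, aux_kv22_c6, aux_kv23_c0, aux_kv23_c1, aux_kv23_c2, aux_kv23_c3, aux_kv23_c4, aux_kv23_c5, aux_kv23_c6] at e1 e2 e3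
    intro i; fin_cases i
    · have h : g 0 * e 2 ^ 2 = 0 := by
        linear_combination e1 + (0:ℝ) * hq' + (0:ℝ) * aux_s2
      exact (mul_eq_zero.mp h).resolve_right (pow_ne_zero _ hj)
    · have h : g 1 * e 2 ^ 2 = 0 := by
        linear_combination e2 + (0:ℝ) * hq' + (0:ℝ) * aux_s2
      exact (mul_eq_zero.mp h).resolve_right (pow_ne_zero _ hj)
    · have h : g 2 * e 2 ^ 2 = 0 := by
        linear_combination e3 + (0:ℝ) * hq' + (0:ℝ) * aux_s2
      exact (mul_eq_zero.mp h).resolve_right (pow_ne_zero _ hj)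
  have hKle : Submodule.span ℝ (Set.range ![aux_kv21 e, aux_kv22 e, aux_kv23 e]) ≤ KerSet e := by
    rw [Submodule.span_le]
    rintro x ⟨i, rfl⟩
    fin_cases i
    · exact aux_kv21_mem e hq
    · exact aux_kv22_mem e hq
    · exact aux_kv23_mem e hq
  have hleK : KerSet e ≤ Submodule.span ℝ (Set.range ![aux_kv21 e, aux_kv22 e, aux_kv23 e]) := by
    intro v hv
    rw [aux_mem_KerSet_iff] at hv
    obtain ⟨h0, h1, h2, h3, h4, h5, h6⟩ := hv
    have hc1 : (e 2 ^ 2) * v 1 = ((-1/2)*e 2*e 3*Real.sqrt 2 - e 0*e 5) * v 0 + (e 1*e 2 + (1/2)*e 0*e 3*Real.sqrt 2) * v 2 + (e 0 ^ 2) * v 5 := by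
      have h : (2*e 2 ^ 4) * ((e 2 ^ 2) * v 1 - (((-1/2)*e 2*e 3*Real.sqrt 2 - e 0*e 5) * v 0 + (e 1*e 2 + (1/2)*e 0*e 3*Real.sqrt 2) * v 2 + (e 0 ^ 2) * v 5)) = 0 := by
        linear_combination (0:ℝ) * h1 + (0:ℝ) * h3 + (e 2 ^ 5*Real.sqrt 2) * h4 + (e 0*e 2 ^ 4*Real.sqrt 2) * h6 + (0:ℝ) * hq' + (-e 2 ^ 6*v 1 + e 1*e 2 ^ 5*v 2 - e 0*e 2 ^ 4*e 5*v 0 + e 0 ^ 2*e 2 ^ 4*v 5) * aux_s2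
      rcases mul_eq_zero.mp h with h' | h'
      · exact absurd h' hD
      · linear_combination h'
    have hc3 : (e 2 ^ 2) * v 3 = (-e 2*e 5*Real.sqrt 2) * v 0 + (e 2*e 3) * v 2 + (e 0*e 2*Real.sqrt 2) * v 5 := by
      have h : (2*e 2 ^ 4) * ((e 2 ^ 2) * v 3 - ((-e 2*e 5*Real.sqrt 2) * v 0 + (e 2*e 3) * v 2 + (e 0*e 2*Real.sqrt 2) * v 5)) = 0 := by
        linear_combination (0:ℝ) * h1 + (0:ℝ) * h3 + (0:ℝ) * h4 + (2*e 2 ^ 5) * h6 + (0:ℝ) * hq' + (0:ℝ) * aux_s2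
      rcases mul_eq_zero.mp h with h' | h'
      · exact absurd h' hD
      · linear_combination h'
    have hc4 : (e 2 ^ 2) * v 4 = (e 5 ^ 2) * v 0 + ((-1/2)*e 3*e 5*Real.sqrt 2 + e 2*e 4) * v 2 + ((1/2)*e 2*e 3*Real.sqrt 2 - e 0*e 5) * v 5 := by
      have h : (2*e 2 ^ 4) * ((e 2 ^ 2) * v 4 - ((e 5 ^ 2) * v 0 + ((-1/2)*e 3*e 5*Real.sqrt 2 + e 2*e 4) * v 2 + ((1/2)*e 2*e 3*Real.sqrt 2 - e 0*e 5) * v 5)) = 0 := by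
        linear_combination (-e 2 ^ 5*Real.sqrt 2) * h1 + (0:ℝ) * h3 + (0:ℝ) * h4 + (-e 2 ^ 4*e 5*Real.sqrt 2) * h6 + (0:ℝ) * hq' + (e 2 ^ 4*e 5 ^ 2*v 0 + e 2 ^ 5*e 4*v 2 - e 2 ^ 6*v 4 - e 0*e 2 ^ 4*e 5*v 5) * aux_s2
      rcases mul_eq_zero.mp h with h' | h'
      · exact absurd h' hD
      · linear_combination h'
    have hc6 : (e 2 ^ 2) * v 6 = ((-1/2)*e 3*e 5*Real.sqrt 2 - e 2*e 4) * v 0 + (e 2*e 6 + e 1*e 5 + e 0*e 4) * v 2 + (-e 1*e 2 + (1/2)*e 0*e 3*Real.sqrt 2) * v 5 := by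
      have h : (2*e 2 ^ 4) * ((e 2 ^ 2) * v 6 - (((-1/2)*e 3*e 5*Real.sqrt 2 - e 2*e 4) * v 0 + (e 2*e 6 + e 1*e 5 + e 0*e 4) * v 2 + (-e 1*e 2 + (1/2)*e 0*e 3*Real.sqrt 2) * v 5)) = 0 := by
        linear_combination (-e 0*e 2 ^ 4*Real.sqrt 2) * h1 + (-2*e 2 ^ 5) * h3 + (e 2 ^ 4*e 5*Real.sqrt 2) * h4 + (0:ℝ) * h6 + (0:ℝ) * hq' + (-e 2 ^ 5*e 5*v 1 + e 1*e 2 ^ 4*e 5*v 2 + e 0*e 2 ^ 4*e 4*v 2 - e 0*e 2 ^ 5*v 4) * aux_s2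
      rcases mul_eq_zero.mp h with h' | h'
      · exact absurd h' hD
      · linear_combination h'
    have hveq : (e 2 ^ 2) • v = v 0 • aux_kv21 e + v 2 • aux_kv22 e + v 5 • aux_kv23 e := by
      funext i
      fin_cases i <;>
        simp only [Pi.add_apply, Pi.smul_apply, smul_eq_mul]
      · show (e 2 ^ 2) * v 0 = v 0 * aux_kv21 e 0 + v 2 * aux_kv22 e 0 + v 5 * aux_kv23 e 0
        rw [aux_kv21_c0, aux_kv22_c0, aux_kv23_c0]
        ring
      · show (e 2 ^ 2) * v 1 = v 0 * aux_kv21 e 1 + v 2 * aux_kv22 e 1 + v 5 * aux_kv23 e 1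
        rw [aux_kv21_c1, aux_kv22_c1, aux_kv23_c1]
        linear_combination hc1
      · show (e 2 ^ 2) * v 2 = v 0 * aux_kv21 e 2 + v 2 * aux_kv22 e 2 + v 5 * aux_kv23 e 2
        rw [aux_kv21_c2, aux_kv22_c2, aux_kv23_c2]
        ring
      · show (e 2 ^ 2) * v 3 = v 0 * aux_kv21 e 3 + v 2 * aux_kv22 e 3 + v 5 * aux_kv23 e 3
        rw [aux_kv21_c3, aux_kv22_c3, aux_kv23_c3]
        linear_combination hc3
      · show (e 2 ^ 2) * v 4 = v 0 * aux_kv21 e 4 + v 2 * aux_kv22 e 4 + v 5 * aux_kv23 e 4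
        rw [aux_kv21_c4, aux_kv22_c4, aux_kv23_c4]
        linear_combination hc4
      · show (e 2 ^ 2) * v 5 = v 0 * aux_kv21 e 5 + v 2 * aux_kv22 e 5 + v 5 * aux_kv23 e 5
        rw [aux_kv21_c5, aux_kv22_c5, aux_kv23_c5]
        ring
      · show (e 2 ^ 2) * v 6 = v 0 * aux_kv21 e 6 + v 2 * aux_kv22 e 6 + v 5 * aux_kv23 e 6
        rw [aux_kv21_c6, aux_kv22_c6, aux_kv23_c6]
        linear_combination hc6
    have hv2 : v = ((e 2 ^ 2))⁻¹ • (v 0 • aux_kv21 e + v 2 • aux_kv22 e + v 5 • aux_kv23 e) := by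
      rw [← hveq, smul_smul, inv_mul_cancel₀ hD0, one_smul]
    rw [hv2]
    refine Submodule.smul_mem _ _ (Submodule.add_mem _ (Submodule.add_mem _
      (Submodule.smul_mem _ _ ?_) (Submodule.smul_mem _ _ ?_)) (Submodule.smul_mem _ _ ?_))
    · exact Submodule.subset_span ⟨0, rfl⟩
    · exact Submodule.subset_span ⟨1, rfl⟩
    · exact Submodule.subset_span ⟨2, rfl⟩
  have hKeq : KerSet e = Submodule.span ℝ (Set.range ![aux_kv21 e, aux_kv22 e, aux_kv23 e]) :=
    le_antisymm hleK hKle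
  constructor
  · rw [hKeq, finrank_span_eq_card hli]; simp
  · intro x hx y hy
    rw [hKeq, Submodule.mem_span_range_iff_exists_fun] at hx hy
    obtain ⟨c, hc⟩ := hx
    obtain ⟨d, hd⟩ := hy
    rw [Fin.sum_univ_three] at hc hd
    simp only [Matrix.cons_val_zero, Matrix.cons_val_one, Matrix.head_cons, Matrix.cons_val_two, Matrix.tail_cons] at hc hd
    rw [← hc, ← hd]
    simp only [bform, Pi.add_apply, Pi.smul_apply, smul_eq_mul, aux_kv21_c0, aux_kv21_c1, aux_kv21_c2, aux_kv21_c3, aux_kv21_c4, aux_kv21_c5, aux_kv21_c6, aux_kv22_c0, aux_kv22_c1, aux_kv22_c2, aux_kv22_c3, aux_kv22_c4, aux_kv22_c5, aux_kv22_c6, aux_kv23_c0, aux_kv23_c1, aux_kv23_c2, aux_kv23_c3, aux_kv23_c4, aux_kv23_c5, aux_kv23_c6]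
    linear_combination (e 2 ^ 2*c 1*d 1) * hq' + (-e 2 ^ 2*e 5 ^ 2*c 0*d 0 + e 0*e 2 ^ 2*e 5*c 2*d 0 + e 0*e 2 ^ 2*e 5*c 0*d 2 - e 0 ^ 2*e 2 ^ 2*c 2*d 2) * aux_s2

def aux_kv41 (e : V7) : V7 := ![(e 2*e 6 + e 1*e 5 + e 0*e 4), ((-1/2)*e 3*e 6*Real.sqrt 2 + e 1*e 4), ((1/2)*e 3*e 5*Real.sqrt 2 + e 2*e 4), (e 3*e 4), (e 4 ^ 2), (0:ℝ), (0:ℝ)]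

lemma aux_kv41_c0 (e : V7) : aux_kv41 e 0 = (e 2*e 6 + e 1*e 5 + e 0*e 4) := rfl

lemma aux_kv41_c1 (e : V7) : aux_kv41 e 1 = ((-1/2)*e 3*e 6*Real.sqrt 2 + e 1*e 4) := rfl

lemma aux_kv41_c2 (e : V7) : aux_kv41 e 2 = ((1/2)*e 3*e 5*Real.sqrt 2 + e 2*e 4) := rfl

lemma aux_kv41_c3 (e : V7) : aux_kv41 e 3 = (e 3*e 4) := rfl

lemma aux_kv41_c4 (e : V7) : aux_kv41 e 4 = (e 4 ^ 2) := rfl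

lemma aux_kv41_c5 (e : V7) : aux_kv41 e 5 = (0:ℝ) := rfl

lemma aux_kv41_c6 (e : V7) : aux_kv41 e 6 = (0:ℝ) := rfl

def aux_kv42 (e : V7) : V7 := ![((-1/2)*e 3*e 6*Real.sqrt 2 - e 1*e 4), (e 6 ^ 2), (-e 5*e 6 + (-1/2)*e 3*e 4*Real.sqrt 2), (-e 4*e 6*Real.sqrt 2), (0:ℝ), (e 4 ^ 2), (0:ℝ)]

lemma aux_kv42_c0 (e : V7) : aux_kv42 e 0 = ((-1/2)*e 3*e 6*Real.sqrt 2 - e 1*e 4) := rfl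

lemma aux_kv42_c1 (e : V7) : aux_kv42 e 1 = (e 6 ^ 2) := rfl

lemma aux_kv42_c2 (e : V7) : aux_kv42 e 2 = (-e 5*e 6 + (-1/2)*e 3*e 4*Real.sqrt 2) := rfl

lemma aux_kv42_c3 (e : V7) : aux_kv42 e 3 = (-e 4*e 6*Real.sqrt 2) := rfl

lemma aux_kv42_c4 (e : V7) : aux_kv42 e 4 = (0:ℝ) := rfl

lemma aux_kv42_c5 (e : V7) : aux_kv42 e 5 = (e 4 ^ 2) := rfl

lemma aux_kv42_c6 (e : V7) : aux_kv42 e 6 = (0:ℝ) := rfl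

def aux_kv43 (e : V7) : V7 := ![((1/2)*e 3*e 5*Real.sqrt 2 - e 2*e 4), (-e 5*e 6 + (1/2)*e 3*e 4*Real.sqrt 2), (e 5 ^ 2), (e 4*e 5*Real.sqrt 2), (0:ℝ), (0:ℝ), (e 4 ^ 2)]

lemma aux_kv43_c0 (e : V7) : aux_kv43 e 0 = ((1/2)*e 3*e 5*Real.sqrt 2 - e 2*e 4) := rfl

lemma aux_kv43_c1 (e : V7) : aux_kv43 e 1 = (-e 5*e 6 + (1/2)*e 3*e 4*Real.sqrt 2) := rfl

lemma aux_kv43_c2 (e : V7) : aux_kv43 e 2 = (e 5 ^ 2) := rfl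

lemma aux_kv43_c3 (e : V7) : aux_kv43 e 3 = (e 4*e 5*Real.sqrt 2) := rfl

lemma aux_kv43_c4 (e : V7) : aux_kv43 e 4 = (0:ℝ) := rfl

lemma aux_kv43_c5 (e : V7) : aux_kv43 e 5 = (0:ℝ) := rfl

lemma aux_kv43_c6 (e : V7) : aux_kv43 e 6 = (e 4 ^ 2) := rfl

lemma aux_kv41_mem (e : V7) (hq : bform e e = 0) : aux_kv41 e ∈ KerSet e := by
  have hq' : e 0 * e 4 + e 4 * e 0 + e 1 * e 5 + e 5 * e 1 + e 2 * e 6 + e 6 * e 2 - e 3 * e 3 = 0 := hq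
  rw [aux_mem_KerSet_iff]
  refine ⟨?_, ?_, ?_, ?_, ?_, ?_, ?_⟩ <;>
    simp only [aux_kv41_c0, aux_kv41_c1, aux_kv41_c2, aux_kv41_c3, aux_kv41_c4, aux_kv41_c5, aux_kv41_c6]
  · linear_combination (0:ℝ) * hq' + (0:ℝ) * aux_s2
  · linear_combination (0:ℝ) * hq' + ((1/2)*e 3*e 4*e 5) * aux_s2
  · linear_combination (0:ℝ) * hq' + ((1/2)*e 3*e 4*e 6) * aux_s2
  · linear_combination (0:ℝ) * hq' + (0:ℝ) * aux_s2
  · linear_combination (0:ℝ) * hq' + ((-1/2)*e 2*e 3*e 6 + (-1/2)*e 1*e 3*e 5) * aux_s2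
  · linear_combination ((-1/2)*e 6*Real.sqrt 2) * hq' + (0:ℝ) * aux_s2
  · linear_combination ((1/2)*e 5*Real.sqrt 2) * hq' + (0:ℝ) * aux_s2

lemma aux_kv42_mem (e : V7) (hq : bform e e = 0) : aux_kv42 e ∈ KerSet e := by
  have hq' : e 0 * e 4 + e 4 * e 0 + e 1 * e 5 + e 5 * e 1 + e 2 * e 6 + e 6 * e 2 - e 3 * e 3 = 0 := hq
  rw [aux_mem_KerSet_iff]
  refine ⟨?_, ?_, ?_, ?_, ?_, ?_, ?_⟩ <;>
    simp only [aux_kv42_c0, aux_kv42_c1, aux_kv42_c2, aux_kv42_c3, aux_kv42_c4, aux_kv42_c5, aux_kv42_c6]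
  · linear_combination (0:ℝ) * hq' + (0:ℝ) * aux_s2
  · linear_combination (0:ℝ) * hq' + ((-1/2)*e 3*e 4 ^ 2) * aux_s2
  · linear_combination (0:ℝ) * hq' + (0:ℝ) * aux_s2
  · linear_combination (0:ℝ) * hq' + (0:ℝ) * aux_s2
  · linear_combination ((1/2)*e 6*Real.sqrt 2) * hq' + ((1/2)*e 1*e 3*e 4) * aux_s2
  · linear_combination (0:ℝ) * hq' + ((1/2)*e 3*e 6 ^ 2) * aux_s2
  · linear_combination ((-1/2)*e 4*Real.sqrt 2) * hq' + ((-1/2)*e 3*e 5*e 6) * aux_s2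

lemma aux_kv43_mem (e : V7) (hq : bform e e = 0) : aux_kv43 e ∈ KerSet e := by
  have hq' : e 0 * e 4 + e 4 * e 0 + e 1 * e 5 + e 5 * e 1 + e 2 * e 6 + e 6 * e 2 - e 3 * e 3 = 0 := hq
  rw [aux_mem_KerSet_iff]
  refine ⟨?_, ?_, ?_, ?_, ?_, ?_, ?_⟩ <;>
    simp only [aux_kv43_c0, aux_kv43_c1, aux_kv43_c2, aux_kv43_c3, aux_kv43_c4, aux_kv43_c5, aux_kv43_c6]
  · linear_combination (0:ℝ) * hq' + (0:ℝ) * aux_s2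
  · linear_combination (0:ℝ) * hq' + (0:ℝ) * aux_s2
  · linear_combination (0:ℝ) * hq' + ((-1/2)*e 3*e 4 ^ 2) * aux_s2
  · linear_combination (0:ℝ) * hq' + (0:ℝ) * aux_s2
  · linear_combination ((-1/2)*e 5*Real.sqrt 2) * hq' + ((1/2)*e 2*e 3*e 4) * aux_s2
  · linear_combination ((1/2)*e 4*Real.sqrt 2) * hq' + ((-1/2)*e 3*e 5*e 6) * aux_s2
  · linear_combination (0:ℝ) * hq' + ((1/2)*e 3*e 5 ^ 2) * aux_s2

lemma aux_case4 (e : V7) (hq : bform e e = 0) (hj : e 4 ≠ 0) :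
    Module.finrank ℝ (KerSet e) = 3 ∧ IsIsotropic (KerSet e) := by
  have hq' : e 0 * e 4 + e 4 * e 0 + e 1 * e 5 + e 5 * e 1 + e 2 * e 6 + e 6 * e 2 - e 3 * e 3 = 0 := hq
  have hD4 : (2 : ℝ) * e 4 ^ 4 ≠ 0 :=
    mul_ne_zero (by norm_num) (pow_ne_zero _ hj)
  have hD : (2*e 4 ^ 4) ≠ 0 := by
    have hDeq : (2*e 4 ^ 4) = (2 : ℝ) * e 4 ^ 4 := by linear_combination (0:ℝ) * hq' + (0:ℝ) * aux_s2
    rw [hDeq]; exact hD4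
  have hD0 : (e 4 ^ 2) ≠ 0 := by
    have hD0eq : (e 4 ^ 2) = e 4 ^ 2 := by linear_combination (0:ℝ) * hq' + (0:ℝ) * aux_s2
    rw [hD0eq]; exact pow_ne_zero _ hj
  have hli : LinearIndependent ℝ ![aux_kv41 e, aux_kv42 e, aux_kv43 e] := by
    rw [Fintype.linearIndependent_iff]
    intro g hg
    rw [Fin.sum_univ_three] at hg
    simp only [Matrix.cons_val_zero, Matrix.cons_val_one, Matrix.head_cons, Matrix.cons_val_two, Matrix.tail_cons] at hg
    have e1 := congrFun hg 4
    have e2 := congrFun hg 5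
    have e3 := congrFun hg 6
    simp only [Pi.add_apply, Pi.smul_apply, smul_eq_mul, Pi.zero_apply, aux_kv41_c0, aux_kv41_c1, aux_kv41_c2, aux_kv41_c3, aux_kv41_c4, aux_kv41_c5, aux_kv41_c6, aux_kv42_c0, aux_kv42_c1, aux_kv42_c2, aux_kv42_c3, aux_kv42_c4, aux_kv42_c5, aux_kv42_c6, aux_kv43_c0, aux_kv43_c1, aux_kv43_c2, aux_kv43_c3, aux_kv43_c4, aux_kv43_c5, aux_kv43_c6] at e1 e2 e3
    intro i; fin_cases i
    · have h : g 0 * e 4 ^ 2 = 0 := by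
        linear_combination e1 + (0:ℝ) * hq' + (0:ℝ) * aux_s2
      exact (mul_eq_zero.mp h).resolve_right (pow_ne_zero _ hj)
    · have h : g 1 * e 4 ^ 2 = 0 := by
        linear_combination e2 + (0:ℝ) * hq' + (0:ℝ) * aux_s2
      exact (mul_eq_zero.mp h).resolve_right (pow_ne_zero _ hj)
    · have h : g 2 * e 4 ^ 2 = 0 := by
        linear_combination e3 + (0:ℝ) * hq' + (0:ℝ) * aux_s2
      exact (mul_eq_zero.mp h).resolve_right (pow_ne_zero _ hj)
  have hKle : Submodule.span ℝ (Set.range ![aux_kv41 e, aux_kv42 e, aux_kv43 e]) ≤ KerSet e := by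
    rw [Submodule.span_le]
    rintro x ⟨i, rfl⟩
    fin_cases i
    · exact aux_kv41_mem e hq
    · exact aux_kv42_mem e hq
    · exact aux_kv43_mem e hq
  have hleK : KerSet e ≤ Submodule.span ℝ (Set.range ![aux_kv41 e, aux_kv42 e, aux_kv43 e]) := by
    intro v hv
    rw [aux_mem_KerSet_iff] at hv
    obtain ⟨h0, h1, h2, h3, h4, h5, h6⟩ := hv
    have hc0 : (e 4 ^ 2) * v 0 = (e 2*e 6 + e 1*e 5 + e 0*e 4) * v 4 + ((-1/2)*e 3*e 6*Real.sqrt 2 - e 1*e 4) * v 5 + ((1/2)*e 3*e 5*Real.sqrt 2 - e 2*e 4) * v 6 := by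
      have h : (2*e 4 ^ 4) * ((e 4 ^ 2) * v 0 - ((e 2*e 6 + e 1*e 5 + e 0*e 4) * v 4 + ((-1/2)*e 3*e 6*Real.sqrt 2 - e 1*e 4) * v 5 + ((1/2)*e 3*e 5*Real.sqrt 2 - e 2*e 4) * v 6)) = 0 := by
        linear_combination (0:ℝ) * h0 + (e 4 ^ 4*e 6*Real.sqrt 2) * h1 + (-e 4 ^ 4*e 5*Real.sqrt 2) * h2 + (-2*e 4 ^ 5) * h3 + (0:ℝ) * hq' + (-e 4 ^ 5*e 6*v 2 - e 4 ^ 5*e 5*v 1 + e 2*e 4 ^ 4*e 6*v 4 + e 1*e 4 ^ 4*e 5*v 4) * aux_s2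
      rcases mul_eq_zero.mp h with h' | h'
      · exact absurd h' hD
      · linear_combination h'
    have hc1 : (e 4 ^ 2) * v 1 = ((-1/2)*e 3*e 6*Real.sqrt 2 + e 1*e 4) * v 4 + (e 6 ^ 2) * v 5 + (-e 5*e 6 + (1/2)*e 3*e 4*Real.sqrt 2) * v 6 := by
      have h : (2*e 4 ^ 4) * ((e 4 ^ 2) * v 1 - (((-1/2)*e 3*e 6*Real.sqrt 2 + e 1*e 4) * v 4 + (e 6 ^ 2) * v 5 + (-e 5*e 6 + (1/2)*e 3*e 4*Real.sqrt 2) * v 6)) = 0 := by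
        linear_combination (-e 4 ^ 4*e 6*Real.sqrt 2) * h0 + (0:ℝ) * h1 + (-e 4 ^ 5*Real.sqrt 2) * h2 + (0:ℝ) * h3 + (0:ℝ) * hq' + (e 4 ^ 4*e 6 ^ 2*v 5 - e 4 ^ 4*e 5*e 6*v 6 - e 4 ^ 6*v 1 + e 1*e 4 ^ 5*v 4) * aux_s2
      rcases mul_eq_zero.mp h with h' | h'
      · exact absurd h' hD
      · linear_combination h'
    have hc2 : (e 4 ^ 2) * v 2 = ((1/2)*e 3*e 5*Real.sqrt 2 + e 2*e 4) * v 4 + (-e 5*e 6 + (-1/2)*e 3*e 4*Real.sqrt 2) * v 5 + (e 5 ^ 2) * v 6 := by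
      have h : (2*e 4 ^ 4) * ((e 4 ^ 2) * v 2 - (((1/2)*e 3*e 5*Real.sqrt 2 + e 2*e 4) * v 4 + (-e 5*e 6 + (-1/2)*e 3*e 4*Real.sqrt 2) * v 5 + (e 5 ^ 2) * v 6)) = 0 := by
        linear_combination (e 4 ^ 4*e 5*Real.sqrt 2) * h0 + (e 4 ^ 5*Real.sqrt 2) * h1 + (0:ℝ) * h2 + (0:ℝ) * h3 + (0:ℝ) * hq' + (-e 4 ^ 4*e 5*e 6*v 5 + e 4 ^ 4*e 5 ^ 2*v 6 - e 4 ^ 6*v 2 + e 2*e 4 ^ 5*v 4) * aux_s2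
      rcases mul_eq_zero.mp h with h' | h'
      · exact absurd h' hD
      · linear_combination h'
    have hc3 : (e 4 ^ 2) * v 3 = (e 3*e 4) * v 4 + (-e 4*e 6*Real.sqrt 2) * v 5 + (e 4*e 5*Real.sqrt 2) * v 6 := by
      have h : (2*e 4 ^ 4) * ((e 4 ^ 2) * v 3 - ((e 3*e 4) * v 4 + (-e 4*e 6*Real.sqrt 2) * v 5 + (e 4*e 5*Real.sqrt 2) * v 6)) = 0 := by
        linear_combination (2*e 4 ^ 5) * h0 + (0:ℝ) * h1 + (0:ℝ) * h2 + (0:ℝ) * h3 + (0:ℝ) * hq' + (0:ℝ) * aux_s2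
      rcases mul_eq_zero.mp h with h' | h'
      · exact absurd h' hD
      · linear_combination h'
    have hveq : (e 4 ^ 2) • v = v 4 • aux_kv41 e + v 5 • aux_kv42 e + v 6 • aux_kv43 e := by
      funext i
      fin_cases i <;>
        simp only [Pi.add_apply, Pi.smul_apply, smul_eq_mul]
      · show (e 4 ^ 2) * v 0 = v 4 * aux_kv41 e 0 + v 5 * aux_kv42 e 0 + v 6 * aux_kv43 e 0
        rw [aux_kv41_c0, aux_kv42_c0, aux_kv43_c0]
        linear_combination hc0
      · show (e 4 ^ 2) * v 1 = v 4 * aux_kv41 e 1 + v 5 * aux_kv42 e 1 + v 6 * aux_kv43 e 1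
        rw [aux_kv41_c1, aux_kv42_c1, aux_kv43_c1]
        linear_combination hc1
      · show (e 4 ^ 2) * v 2 = v 4 * aux_kv41 e 2 + v 5 * aux_kv42 e 2 + v 6 * aux_kv43 e 2
        rw [aux_kv41_c2, aux_kv42_c2, aux_kv43_c2]
        linear_combination hc2
      · show (e 4 ^ 2) * v 3 = v 4 * aux_kv41 e 3 + v 5 * aux_kv42 e 3 + v 6 * aux_kv43 e 3
        rw [aux_kv41_c3, aux_kv42_c3, aux_kv43_c3]
        linear_combination hc3
      · show (e 4 ^ 2) * v 4 = v 4 * aux_kv41 e 4 + v 5 * aux_kv42 e 4 + v 6 * aux_kv43 e 4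
        rw [aux_kv41_c4, aux_kv42_c4, aux_kv43_c4]
        ring
      · show (e 4 ^ 2) * v 5 = v 4 * aux_kv41 e 5 + v 5 * aux_kv42 e 5 + v 6 * aux_kv43 e 5
        rw [aux_kv41_c5, aux_kv42_c5, aux_kv43_c5]
        ring
      · show (e 4 ^ 2) * v 6 = v 4 * aux_kv41 e 6 + v 5 * aux_kv42 e 6 + v 6 * aux_kv43 e 6
        rw [aux_kv41_c6, aux_kv42_c6, aux_kv43_c6]
        ring
    have hv2 : v = ((e 4 ^ 2))⁻¹ • (v 4 • aux_kv41 e + v 5 • aux_kv42 e + v 6 • aux_kv43 e) := by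
      rw [← hveq, smul_smul, inv_mul_cancel₀ hD0, one_smul]
    rw [hv2]
    refine Submodule.smul_mem _ _ (Submodule.add_mem _ (Submodule.add_mem _
      (Submodule.smul_mem _ _ ?_) (Submodule.smul_mem _ _ ?_)) (Submodule.smul_mem _ _ ?_))
    · exact Submodule.subset_span ⟨0, rfl⟩
    · exact Submodule.subset_span ⟨1, rfl⟩
    · exact Submodule.subset_span ⟨2, rfl⟩
  have hKeq : KerSet e = Submodule.span ℝ (Set.range ![aux_kv41 e, aux_kv42 e, aux_kv43 e]) :=
    le_antisymm hleK hKle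
  constructor
  · rw [hKeq, finrank_span_eq_card hli]; simp
  · intro x hx y hy
    rw [hKeq, Submodule.mem_span_range_iff_exists_fun] at hx hy
    obtain ⟨c, hc⟩ := hx
    obtain ⟨d, hd⟩ := hy
    rw [Fin.sum_univ_three] at hc hd
    simp only [Matrix.cons_val_zero, Matrix.cons_val_one, Matrix.head_cons, Matrix.cons_val_two, Matrix.tail_cons] at hc hd
    rw [← hc, ← hd]
    simp only [bform, Pi.add_apply, Pi.smul_apply, smul_eq_mul, aux_kv41_c0, aux_kv41_c1, aux_kv41_c2, aux_kv41_c3, aux_kv41_c4, aux_kv41_c5, aux_kv41_c6, aux_kv42_c0, aux_kv42_c1, aux_kv42_c2, aux_kv42_c3, aux_kv42_c4, aux_kv42_c5, aux_kv42_c6, aux_kv43_c0, aux_kv43_c1, aux_kv43_c2, aux_kv43_c3, aux_kv43_c4, aux_kv43_c5, aux_kv43_c6]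
    linear_combination (e 4 ^ 2*c 0*d 0) * hq' + (-e 4 ^ 2*e 6 ^ 2*c 1*d 1 + e 4 ^ 2*e 5*e 6*c 2*d 1 + e 4 ^ 2*e 5*e 6*c 1*d 2 - e 4 ^ 2*e 5 ^ 2*c 2*d 2) * aux_s2

def aux_kv51 (e : V7) : V7 := ![((1/2)*e 3*e 5*Real.sqrt 2 - e 2*e 4), (-e 5*e 6 + (1/2)*e 3*e 4*Real.sqrt 2), (e 5 ^ 2), (e 4*e 5*Real.sqrt 2), (0:ℝ), (0:ℝ), (e 4 ^ 2)]

lemma aux_kv51_c0 (e : V7) : aux_kv51 e 0 = ((1/2)*e 3*e 5*Real.sqrt 2 - e 2*e 4) := rfl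

lemma aux_kv51_c1 (e : V7) : aux_kv51 e 1 = (-e 5*e 6 + (1/2)*e 3*e 4*Real.sqrt 2) := rfl

lemma aux_kv51_c2 (e : V7) : aux_kv51 e 2 = (e 5 ^ 2) := rfl

lemma aux_kv51_c3 (e : V7) : aux_kv51 e 3 = (e 4*e 5*Real.sqrt 2) := rfl

lemma aux_kv51_c4 (e : V7) : aux_kv51 e 4 = (0:ℝ) := rfl

lemma aux_kv51_c5 (e : V7) : aux_kv51 e 5 = (0:ℝ) := rfl

lemma aux_kv51_c6 (e : V7) : aux_kv51 e 6 = (e 4 ^ 2) := rfl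

def aux_kv52 (e : V7) : V7 := ![(e 2 ^ 2), ((-1/2)*e 2*e 3*Real.sqrt 2 - e 0*e 5), (0:ℝ), (-e 2*e 5*Real.sqrt 2), (e 5 ^ 2), (0:ℝ), ((-1/2)*e 3*e 5*Real.sqrt 2 - e 2*e 4)]

lemma aux_kv52_c0 (e : V7) : aux_kv52 e 0 = (e 2 ^ 2) := rfl

lemma aux_kv52_c1 (e : V7) : aux_kv52 e 1 = ((-1/2)*e 2*e 3*Real.sqrt 2 - e 0*e 5) := rfl

lemma aux_kv52_c2 (e : V7) : aux_kv52 e 2 = (0:ℝ) := rfl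

lemma aux_kv52_c3 (e : V7) : aux_kv52 e 3 = (-e 2*e 5*Real.sqrt 2) := rfl

lemma aux_kv52_c4 (e : V7) : aux_kv52 e 4 = (e 5 ^ 2) := rfl

lemma aux_kv52_c5 (e : V7) : aux_kv52 e 5 = (0:ℝ) := rfl

lemma aux_kv52_c6 (e : V7) : aux_kv52 e 6 = ((-1/2)*e 3*e 5*Real.sqrt 2 - e 2*e 4) := rfl

def aux_kv53 (e : V7) : V7 := ![((-1/2)*e 2*e 3*Real.sqrt 2 + e 0*e 5), (e 2*e 6 + e 1*e 5 + e 0*e 4), (0:ℝ), (e 3*e 5), (0:ℝ), (e 5 ^ 2), (e 5*e 6 + (1/2)*e 3*e 4*Real.sqrt 2)]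

lemma aux_kv53_c0 (e : V7) : aux_kv53 e 0 = ((-1/2)*e 2*e 3*Real.sqrt 2 + e 0*e 5) := rfl

lemma aux_kv53_c1 (e : V7) : aux_kv53 e 1 = (e 2*e 6 + e 1*e 5 + e 0*e 4) := rfl

lemma aux_kv53_c2 (e : V7) : aux_kv53 e 2 = (0:ℝ) := rfl

lemma aux_kv53_c3 (e : V7) : aux_kv53 e 3 = (e 3*e 5) := rfl

lemma aux_kv53_c4 (e : V7) : aux_kv53 e 4 = (0:ℝ) := rfl

lemma aux_kv53_c5 (e : V7) : aux_kv53 e 5 = (e 5 ^ 2) := rfl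

lemma aux_kv53_c6 (e : V7) : aux_kv53 e 6 = (e 5*e 6 + (1/2)*e 3*e 4*Real.sqrt 2) := rfl

lemma aux_kv51_mem (e : V7) (hq : bform e e = 0) : aux_kv51 e ∈ KerSet e := by
  have hq' : e 0 * e 4 + e 4 * e 0 + e 1 * e 5 + e 5 * e 1 + e 2 * e 6 + e 6 * e 2 - e 3 * e 3 = 0 := hq
  rw [aux_mem_KerSet_iff]
  refine ⟨?_, ?_, ?_, ?_, ?_, ?_, ?_⟩ <;>
    simp only [aux_kv51_c0, aux_kv51_c1, aux_kv51_c2, aux_kv51_c3, aux_kv51_c4, aux_kv51_c5, aux_kv51_c6]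
  · linear_combination (0:ℝ) * hq' + (0:ℝ) * aux_s2
  · linear_combination (0:ℝ) * hq' + (0:ℝ) * aux_s2
  · linear_combination (0:ℝ) * hq' + ((-1/2)*e 3*e 4 ^ 2) * aux_s2
  · linear_combination (0:ℝ) * hq' + (0:ℝ) * aux_s2
  · linear_combination ((-1/2)*e 5*Real.sqrt 2) * hq' + ((1/2)*e 2*e 3*e 4) * aux_s2
  · linear_combination ((1/2)*e 4*Real.sqrt 2) * hq' + ((-1/2)*e 3*e 5*e 6) * aux_s2
  · linear_combination (0:ℝ) * hq' + ((1/2)*e 3*e 5 ^ 2) * aux_s2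

lemma aux_kv52_mem (e : V7) (hq : bform e e = 0) : aux_kv52 e ∈ KerSet e := by
  have hq' : e 0 * e 4 + e 4 * e 0 + e 1 * e 5 + e 5 * e 1 + e 2 * e 6 + e 6 * e 2 - e 3 * e 3 = 0 := hq
  rw [aux_mem_KerSet_iff]
  refine ⟨?_, ?_, ?_, ?_, ?_, ?_, ?_⟩ <;>
    simp only [aux_kv52_c0, aux_kv52_c1, aux_kv52_c2, aux_kv52_c3, aux_kv52_c4, aux_kv52_c5, aux_kv52_c6]
  · linear_combination (0:ℝ) * hq' + ((1/2)*e 3*e 5 ^ 2) * aux_s2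
  · linear_combination (0:ℝ) * hq' + (0:ℝ) * aux_s2
  · linear_combination ((1/2)*e 5*Real.sqrt 2) * hq' + ((1/2)*e 2*e 3*e 4) * aux_s2
  · linear_combination (0:ℝ) * hq' + (0:ℝ) * aux_s2
  · linear_combination (0:ℝ) * hq' + ((-1/2)*e 2 ^ 2*e 3) * aux_s2
  · linear_combination ((-1/2)*e 2*Real.sqrt 2) * hq' + ((-1/2)*e 0*e 3*e 5) * aux_s2
  · linear_combination (0:ℝ) * hq' + (0:ℝ) * aux_s2

lemma aux_kv53_mem (e : V7) (hq : bform e e = 0) : aux_kv53 e ∈ KerSet e := by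
  have hq' : e 0 * e 4 + e 4 * e 0 + e 1 * e 5 + e 5 * e 1 + e 2 * e 6 + e 6 * e 2 - e 3 * e 3 = 0 := hq
  rw [aux_mem_KerSet_iff]
  refine ⟨?_, ?_, ?_, ?_, ?_, ?_, ?_⟩ <;>
    simp only [aux_kv53_c0, aux_kv53_c1, aux_kv53_c2, aux_kv53_c3, aux_kv53_c4, aux_kv53_c5, aux_kv53_c6]
  · linear_combination (0:ℝ) * hq' + ((-1/2)*e 3*e 4*e 5) * aux_s2
  · linear_combination (0:ℝ) * hq' + (0:ℝ) * aux_s2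
  · linear_combination ((-1/2)*e 4*Real.sqrt 2) * hq' + (0:ℝ) * aux_s2
  · linear_combination (0:ℝ) * hq' + (0:ℝ) * aux_s2
  · linear_combination ((1/2)*e 2*Real.sqrt 2) * hq' + (0:ℝ) * aux_s2
  · linear_combination (0:ℝ) * hq' + ((1/2)*e 2*e 3*e 6 + (1/2)*e 0*e 3*e 4) * aux_s2
  · linear_combination (0:ℝ) * hq' + ((-1/2)*e 2*e 3*e 5) * aux_s2

lemma aux_case5 (e : V7) (hq : bform e e = 0) (hj : e 5 ≠ 0) :
    Module.finrank ℝ (KerSet e) = 3 ∧ IsIsotropic (KerSet e) := by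
  have hq' : e 0 * e 4 + e 4 * e 0 + e 1 * e 5 + e 5 * e 1 + e 2 * e 6 + e 6 * e 2 - e 3 * e 3 = 0 := hq
  have hD4 : (2 : ℝ) * e 5 ^ 4 ≠ 0 :=
    mul_ne_zero (by norm_num) (pow_ne_zero _ hj)
  have hD : (2*e 5 ^ 4) ≠ 0 := by
    have hDeq : (2*e 5 ^ 4) = (2 : ℝ) * e 5 ^ 4 := by linear_combination (0:ℝ) * hq' + (0:ℝ) * aux_s2
    rw [hDeq]; exact hD4
  have hD0 : (e 5 ^ 2) ≠ 0 := by
    have hD0eq : (e 5 ^ 2) = e 5 ^ 2 := by linear_combination (0:ℝ) * hq' + (0:ℝ) * aux_s2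
    rw [hD0eq]; exact pow_ne_zero _ hj
  have hli : LinearIndependent ℝ ![aux_kv51 e, aux_kv52 e, aux_kv53 e] := by
    rw [Fintype.linearIndependent_iff]
    intro g hg
    rw [Fin.sum_univ_three] at hg
    simp only [Matrix.cons_val_zero, Matrix.cons_val_one, Matrix.head_cons, Matrix.cons_val_two, Matrix.tail_cons] at hg
    have e1 := congrFun hg 2
    have e2 := congrFun hg 4
    have e3 := congrFun hg 5
    simp only [Pi.add_apply, Pi.smul_apply, smul_eq_mul, Pi.zero_apply, aux_kv51_c0, aux_kv51_c1, aux_kv51_c2, aux_kv51_c3, aux_kv51_c4, aux_kv51_c5, aux_kv51_c6, aux_kv52_c0, aux_kv52_c1, aux_kv52_c2, aux_kv52_c3, aux_kv52_c4, aux_kv52_c5, aux_kv52_c6, aux_kv53_c0, aux_kv53_c1, aux_kv53_c2, aux_kv53_c3, aux_kv53_c4, aux_kv53_c5, aux_kv53_c6] at e1 e2 e3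
    intro i; fin_cases i
    · have h : g 0 * e 5 ^ 2 = 0 := by
        linear_combination e1 + (0:ℝ) * hq' + (0:ℝ) * aux_s2
      exact (mul_eq_zero.mp h).resolve_right (pow_ne_zero _ hj)
    · have h : g 1 * e 5 ^ 2 = 0 := by
        linear_combination e2 + (0:ℝ) * hq' + (0:ℝ) * aux_s2
      exact (mul_eq_zero.mp h).resolve_right (pow_ne_zero _ hj)
    · have h : g 2 * e 5 ^ 2 = 0 := by
        linear_combination e3 + (0:ℝ) * hq' + (0:ℝ) * aux_s2
      exact (mul_eq_zero.mp h).resolve_right (pow_ne_zero _ hj)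
  have hKle : Submodule.span ℝ (Set.range ![aux_kv51 e, aux_kv52 e, aux_kv53 e]) ≤ KerSet e := by
    rw [Submodule.span_le]
    rintro x ⟨i, rfl⟩
    fin_cases i
    · exact aux_kv51_mem e hq
    · exact aux_kv52_mem e hq
    · exact aux_kv53_mem e hq
  have hleK : KerSet e ≤ Submodule.span ℝ (Set.range ![aux_kv51 e, aux_kv52 e, aux_kv53 e]) := by
    intro v hv
    rw [aux_mem_KerSet_iff] at hv
    obtain ⟨h0, h1, h2, h3, h4, h5, h6⟩ := hv
    have hc0 : (e 5 ^ 2) * v 0 = ((1/2)*e 3*e 5*Real.sqrt 2 - e 2*e 4) * v 2 + (e 2 ^ 2) * v 4 + ((-1/2)*e 2*e 3*Real.sqrt 2 + e 0*e 5) * v 5 := by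
      have h : (2*e 5 ^ 4) * ((e 5 ^ 2) * v 0 - (((1/2)*e 3*e 5*Real.sqrt 2 - e 2*e 4) * v 2 + (e 2 ^ 2) * v 4 + ((-1/2)*e 2*e 3*Real.sqrt 2 + e 0*e 5) * v 5)) = 0 := by
        linear_combination (0:ℝ) * h0 + (e 2*e 5 ^ 4*Real.sqrt 2) * h1 + (0:ℝ) * h3 + (e 5 ^ 5*Real.sqrt 2) * h6 + (0:ℝ) * hq' + (-e 5 ^ 6*v 0 - e 2*e 4*e 5 ^ 4*v 2 + e 2 ^ 2*e 5 ^ 4*v 4 + e 0*e 5 ^ 5*v 5) * aux_s2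
      rcases mul_eq_zero.mp h with h' | h'
      · exact absurd h' hD
      · linear_combination h'
    have hc1 : (e 5 ^ 2) * v 1 = (-e 5*e 6 + (1/2)*e 3*e 4*Real.sqrt 2) * v 2 + ((-1/2)*e 2*e 3*Real.sqrt 2 - e 0*e 5) * v 4 + (e 2*e 6 + e 1*e 5 + e 0*e 4) * v 5 := by
      have h : (2*e 5 ^ 4) * ((e 5 ^ 2) * v 1 - ((-e 5*e 6 + (1/2)*e 3*e 4*Real.sqrt 2) * v 2 + ((-1/2)*e 2*e 3*Real.sqrt 2 - e 0*e 5) * v 4 + (e 2*e 6 + e 1*e 5 + e 0*e 4) * v 5)) = 0 := by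
        linear_combination (-e 2*e 5 ^ 4*Real.sqrt 2) * h0 + (0:ℝ) * h1 + (2*e 5 ^ 5) * h3 + (e 4*e 5 ^ 4*Real.sqrt 2) * h6 + (0:ℝ) * hq' + (-e 4*e 5 ^ 5*v 0 + e 2*e 5 ^ 4*e 6*v 5 - e 2*e 5 ^ 5*v 6 + e 0*e 4*e 5 ^ 4*v 5) * aux_s2
      rcases mul_eq_zero.mp h with h' | h'
      · exact absurd h' hD
      · linear_combination h'
    have hc3 : (e 5 ^ 2) * v 3 = (e 4*e 5*Real.sqrt 2) * v 2 + (-e 2*e 5*Real.sqrt 2) * v 4 + (e 3*e 5) * v 5 := by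
      have h : (2*e 5 ^ 4) * ((e 5 ^ 2) * v 3 - ((e 4*e 5*Real.sqrt 2) * v 2 + (-e 2*e 5*Real.sqrt 2) * v 4 + (e 3*e 5) * v 5)) = 0 := by
        linear_combination (0:ℝ) * h0 + (-2*e 5 ^ 5) * h1 + (0:ℝ) * h3 + (0:ℝ) * h6 + (0:ℝ) * hq' + (0:ℝ) * aux_s2
      rcases mul_eq_zero.mp h with h' | h'
      · exact absurd h' hD
      · linear_combination h'
    have hc6 : (e 5 ^ 2) * v 6 = (e 4 ^ 2) * v 2 + ((-1/2)*e 3*e 5*Real.sqrt 2 - e 2*e 4) * v 4 + (e 5*e 6 + (1/2)*e 3*e 4*Real.sqrt 2) * v 5 := by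
      have h : (2*e 5 ^ 4) * ((e 5 ^ 2) * v 6 - ((e 4 ^ 2) * v 2 + ((-1/2)*e 3*e 5*Real.sqrt 2 - e 2*e 4) * v 4 + (e 5*e 6 + (1/2)*e 3*e 4*Real.sqrt 2) * v 5)) = 0 := by
        linear_combination (-e 5 ^ 5*Real.sqrt 2) * h0 + (-e 4*e 5 ^ 4*Real.sqrt 2) * h1 + (0:ℝ) * h3 + (0:ℝ) * h6 + (0:ℝ) * hq' + (e 5 ^ 5*e 6*v 5 - e 5 ^ 6*v 6 + e 4 ^ 2*e 5 ^ 4*v 2 - e 2*e 4*e 5 ^ 4*v 4) * aux_s2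
      rcases mul_eq_zero.mp h with h' | h'
      · exact absurd h' hD
      · linear_combination h'
    have hveq : (e 5 ^ 2) • v = v 2 • aux_kv51 e + v 4 • aux_kv52 e + v 5 • aux_kv53 e := by
      funext i
      fin_cases i <;>
        simp only [Pi.add_apply, Pi.smul_apply, smul_eq_mul]
      · show (e 5 ^ 2) * v 0 = v 2 * aux_kv51 e 0 + v 4 * aux_kv52 e 0 + v 5 * aux_kv53 e 0
        rw [aux_kv51_c0, aux_kv52_c0, aux_kv53_c0]
        linear_combination hc0
      · show (e 5 ^ 2) * v 1 = v 2 * aux_kv51 e 1 + v 4 * aux_kv52 e 1 + v 5 * aux_kv53 e 1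
        rw [aux_kv51_c1, aux_kv52_c1, aux_kv53_c1]
        linear_combination hc1
      · show (e 5 ^ 2) * v 2 = v 2 * aux_kv51 e 2 + v 4 * aux_kv52 e 2 + v 5 * aux_kv53 e 2
        rw [aux_kv51_c2, aux_kv52_c2, aux_kv53_c2]
        ring
      · show (e 5 ^ 2) * v 3 = v 2 * aux_kv51 e 3 + v 4 * aux_kv52 e 3 + v 5 * aux_kv53 e 3
        rw [aux_kv51_c3, aux_kv52_c3, aux_kv53_c3]
        linear_combination hc3
      · show (e 5 ^ 2) * v 4 = v 2 * aux_kv51 e 4 + v 4 * aux_kv52 e 4 + v 5 * aux_kv53 e 4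
        rw [aux_kv51_c4, aux_kv52_c4, aux_kv53_c4]
        ring
      · show (e 5 ^ 2) * v 5 = v 2 * aux_kv51 e 5 + v 4 * aux_kv52 e 5 + v 5 * aux_kv53 e 5
        rw [aux_kv51_c5, aux_kv52_c5, aux_kv53_c5]
        ring
      · show (e 5 ^ 2) * v 6 = v 2 * aux_kv51 e 6 + v 4 * aux_kv52 e 6 + v 5 * aux_kv53 e 6
        rw [aux_kv51_c6, aux_kv52_c6, aux_kv53_c6]
        linear_combination hc6
    have hv2 : v = ((e 5 ^ 2))⁻¹ • (v 2 • aux_kv51 e + v 4 • aux_kv52 e + v 5 • aux_kv53 e) := by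
      rw [← hveq, smul_smul, inv_mul_cancel₀ hD0, one_smul]
    rw [hv2]
    refine Submodule.smul_mem _ _ (Submodule.add_mem _ (Submodule.add_mem _
      (Submodule.smul_mem _ _ ?_) (Submodule.smul_mem _ _ ?_)) (Submodule.smul_mem _ _ ?_))
    · exact Submodule.subset_span ⟨0, rfl⟩
    · exact Submodule.subset_span ⟨1, rfl⟩
    · exact Submodule.subset_span ⟨2, rfl⟩
  have hKeq : KerSet e = Submodule.span ℝ (Set.range ![aux_kv51 e, aux_kv52 e, aux_kv53 e]) :=
    le_antisymm hleK hKle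
  constructor
  · rw [hKeq, finrank_span_eq_card hli]; simp
  · intro x hx y hy
    rw [hKeq, Submodule.mem_span_range_iff_exists_fun] at hx hy
    obtain ⟨c, hc⟩ := hx
    obtain ⟨d, hd⟩ := hy
    rw [Fin.sum_univ_three] at hc hd
    simp only [Matrix.cons_val_zero, Matrix.cons_val_one, Matrix.head_cons, Matrix.cons_val_two, Matrix.tail_cons] at hc hd
    rw [← hc, ← hd]
    simp only [bform, Pi.add_apply, Pi.smul_apply, smul_eq_mul, aux_kv51_c0, aux_kv51_c1, aux_kv51_c2, aux_kv51_c3, aux_kv51_c4, aux_kv51_c5, aux_kv51_c6, aux_kv52_c0, aux_kv52_c1, aux_kv52_c2, aux_kv52_c3, aux_kv52_c4, aux_kv52_c5, aux_kv52_c6, aux_kv53_c0, aux_kv53_c1, aux_kv53_c2, aux_kv53_c3, aux_kv53_c4, aux_kv53_c5, aux_kv53_c6]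
    linear_combination (e 5 ^ 2*c 2*d 2) * hq' + (-e 4 ^ 2*e 5 ^ 2*c 0*d 0 + e 2*e 4*e 5 ^ 2*c 1*d 0 + e 2*e 4*e 5 ^ 2*c 0*d 1 - e 2 ^ 2*e 5 ^ 2*c 1*d 1) * aux_s2

def aux_kv61 (e : V7) : V7 := ![((-1/2)*e 3*e 6*Real.sqrt 2 - e 1*e 4), (e 6 ^ 2), (-e 5*e 6 + (-1/2)*e 3*e 4*Real.sqrt 2), (-e 4*e 6*Real.sqrt 2), (0:ℝ), (e 4 ^ 2), (0:ℝ)]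

lemma aux_kv61_c0 (e : V7) : aux_kv61 e 0 = ((-1/2)*e 3*e 6*Real.sqrt 2 - e 1*e 4) := rfl

lemma aux_kv61_c1 (e : V7) : aux_kv61 e 1 = (e 6 ^ 2) := rfl

lemma aux_kv61_c2 (e : V7) : aux_kv61 e 2 = (-e 5*e 6 + (-1/2)*e 3*e 4*Real.sqrt 2) := rfl

lemma aux_kv61_c3 (e : V7) : aux_kv61 e 3 = (-e 4*e 6*Real.sqrt 2) := rfl

lemma aux_kv61_c4 (e : V7) : aux_kv61 e 4 = (0:ℝ) := rfl

lemma aux_kv61_c5 (e : V7) : aux_kv61 e 5 = (e 4 ^ 2) := rfl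

lemma aux_kv61_c6 (e : V7) : aux_kv61 e 6 = (0:ℝ) := rfl

def aux_kv62 (e : V7) : V7 := ![(e 1 ^ 2), (0:ℝ), ((1/2)*e 1*e 3*Real.sqrt 2 - e 0*e 6), (e 1*e 6*Real.sqrt 2), (e 6 ^ 2), ((1/2)*e 3*e 6*Real.sqrt 2 - e 1*e 4), (0:ℝ)]

lemma aux_kv62_c0 (e : V7) : aux_kv62 e 0 = (e 1 ^ 2) := rfl

lemma aux_kv62_c1 (e : V7) : aux_kv62 e 1 = (0:ℝ) := rfl

lemma aux_kv62_c2 (e : V7) : aux_kv62 e 2 = ((1/2)*e 1*e 3*Real.sqrt 2 - e 0*e 6) := rfl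

lemma aux_kv62_c3 (e : V7) : aux_kv62 e 3 = (e 1*e 6*Real.sqrt 2) := rfl

lemma aux_kv62_c4 (e : V7) : aux_kv62 e 4 = (e 6 ^ 2) := rfl

lemma aux_kv62_c5 (e : V7) : aux_kv62 e 5 = ((1/2)*e 3*e 6*Real.sqrt 2 - e 1*e 4) := rfl

lemma aux_kv62_c6 (e : V7) : aux_kv62 e 6 = (0:ℝ) := rfl

def aux_kv63 (e : V7) : V7 := ![((1/2)*e 1*e 3*Real.sqrt 2 + e 0*e 6), (0:ℝ), (e 2*e 6 + e 1*e 5 + e 0*e 4), (e 3*e 6), (0:ℝ), (e 5*e 6 + (-1/2)*e 3*e 4*Real.sqrt 2), (e 6 ^ 2)]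

lemma aux_kv63_c0 (e : V7) : aux_kv63 e 0 = ((1/2)*e 1*e 3*Real.sqrt 2 + e 0*e 6) := rfl

lemma aux_kv63_c1 (e : V7) : aux_kv63 e 1 = (0:ℝ) := rfl

lemma aux_kv63_c2 (e : V7) : aux_kv63 e 2 = (e 2*e 6 + e 1*e 5 + e 0*e 4) := rfl

lemma aux_kv63_c3 (e : V7) : aux_kv63 e 3 = (e 3*e 6) := rfl

lemma aux_kv63_c4 (e : V7) : aux_kv63 e 4 = (0:ℝ) := rfl

lemma aux_kv63_c5 (e : V7) : aux_kv63 e 5 = (e 5*e 6 + (-1/2)*e 3*e 4*Real.sqrt 2) := rfl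

lemma aux_kv63_c6 (e : V7) : aux_kv63 e 6 = (e 6 ^ 2) := rfl

lemma aux_kv61_mem (e : V7) (hq : bform e e = 0) : aux_kv61 e ∈ KerSet e := by
  have hq' : e 0 * e 4 + e 4 * e 0 + e 1 * e 5 + e 5 * e 1 + e 2 * e 6 + e 6 * e 2 - e 3 * e 3 = 0 := hq
  rw [aux_mem_KerSet_iff]
  refine ⟨?_, ?_, ?_, ?_, ?_, ?_, ?_⟩ <;>
    simp only [aux_kv61_c0, aux_kv61_c1, aux_kv61_c2, aux_kv61_c3, aux_kv61_c4, aux_kv61_c5, aux_kv61_c6]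
  · linear_combination (0:ℝ) * hq' + (0:ℝ) * aux_s2
  · linear_combination (0:ℝ) * hq' + ((-1/2)*e 3*e 4 ^ 2) * aux_s2
  · linear_combination (0:ℝ) * hq' + (0:ℝ) * aux_s2
  · linear_combination (0:ℝ) * hq' + (0:ℝ) * aux_s2
  · linear_combination ((1/2)*e 6*Real.sqrt 2) * hq' + ((1/2)*e 1*e 3*e 4) * aux_s2
  · linear_combination (0:ℝ) * hq' + ((1/2)*e 3*e 6 ^ 2) * aux_s2
  · linear_combination ((-1/2)*e 4*Real.sqrt 2) * hq' + ((-1/2)*e 3*e 5*e 6) * aux_s2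

lemma aux_kv62_mem (e : V7) (hq : bform e e = 0) : aux_kv62 e ∈ KerSet e := by
  have hq' : e 0 * e 4 + e 4 * e 0 + e 1 * e 5 + e 5 * e 1 + e 2 * e 6 + e 6 * e 2 - e 3 * e 3 = 0 := hq
  rw [aux_mem_KerSet_iff]
  refine ⟨?_, ?_, ?_, ?_, ?_, ?_, ?_⟩ <;>
    simp only [aux_kv62_c0, aux_kv62_c1, aux_kv62_c2, aux_kv62_c3, aux_kv62_c4, aux_kv62_c5, aux_kv62_c6]
  · linear_combination (0:ℝ) * hq' + ((1/2)*e 3*e 6 ^ 2) * aux_s2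
  · linear_combination ((-1/2)*e 6*Real.sqrt 2) * hq' + ((1/2)*e 1*e 3*e 4) * aux_s2
  · linear_combination (0:ℝ) * hq' + (0:ℝ) * aux_s2
  · linear_combination (0:ℝ) * hq' + (0:ℝ) * aux_s2
  · linear_combination (0:ℝ) * hq' + ((-1/2)*e 1 ^ 2*e 3) * aux_s2
  · linear_combination (0:ℝ) * hq' + (0:ℝ) * aux_s2
  · linear_combination ((1/2)*e 1*Real.sqrt 2) * hq' + ((-1/2)*e 0*e 3*e 6) * aux_s2

lemma aux_kv63_mem (e : V7) (hq : bform e e = 0) : aux_kv63 e ∈ KerSet e := by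
  have hq' : e 0 * e 4 + e 4 * e 0 + e 1 * e 5 + e 5 * e 1 + e 2 * e 6 + e 6 * e 2 - e 3 * e 3 = 0 := hq
  rw [aux_mem_KerSet_iff]
  refine ⟨?_, ?_, ?_, ?_, ?_, ?_, ?_⟩ <;>
    simp only [aux_kv63_c0, aux_kv63_c1, aux_kv63_c2, aux_kv63_c3, aux_kv63_c4, aux_kv63_c5, aux_kv63_c6]
  · linear_combination (0:ℝ) * hq' + ((-1/2)*e 3*e 4*e 6) * aux_s2
  · linear_combination ((1/2)*e 4*Real.sqrt 2) * hq' + (0:ℝ) * aux_s2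
  · linear_combination (0:ℝ) * hq' + (0:ℝ) * aux_s2
  · linear_combination (0:ℝ) * hq' + (0:ℝ) * aux_s2
  · linear_combination ((-1/2)*e 1*Real.sqrt 2) * hq' + (0:ℝ) * aux_s2
  · linear_combination (0:ℝ) * hq' + ((-1/2)*e 1*e 3*e 6) * aux_s2
  · linear_combination (0:ℝ) * hq' + ((1/2)*e 1*e 3*e 5 + (1/2)*e 0*e 3*e 4) * aux_s2

lemma aux_case6 (e : V7) (hq : bform e e = 0) (hj : e 6 ≠ 0) :
    Module.finrank ℝ (KerSet e) = 3 ∧ IsIsotropic (KerSet e) := by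
  have hq' : e 0 * e 4 + e 4 * e 0 + e 1 * e 5 + e 5 * e 1 + e 2 * e 6 + e 6 * e 2 - e 3 * e 3 = 0 := hq
  have hD4 : (2 : ℝ) * e 6 ^ 4 ≠ 0 :=
    mul_ne_zero (by norm_num) (pow_ne_zero _ hj)
  have hD : (2*e 6 ^ 4) ≠ 0 := by
    have hDeq : (2*e 6 ^ 4) = (2 : ℝ) * e 6 ^ 4 := by linear_combination (0:ℝ) * hq' + (0:ℝ) * aux_s2
    rw [hDeq]; exact hD4
  have hD0 : (e 6 ^ 2) ≠ 0 := by
    have hD0eq : (e 6 ^ 2) = e 6 ^ 2 := by linear_combination (0:ℝ) * hq' + (0:ℝ) * aux_s2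
    rw [hD0eq]; exact pow_ne_zero _ hj
  have hli : LinearIndependent ℝ ![aux_kv61 e, aux_kv62 e, aux_kv63 e] := by
    rw [Fintype.linearIndependent_iff]
    intro g hg
    rw [Fin.sum_univ_three] at hg
    simp only [Matrix.cons_val_zero, Matrix.cons_val_one, Matrix.head_cons, Matrix.cons_val_two, Matrix.tail_cons] at hg
    have e1 := congrFun hg 1
    have e2 := congrFun hg 4
    have e3 := congrFun hg 6
    simp only [Pi.add_apply, Pi.smul_apply, smul_eq_mul, Pi.zero_apply, aux_kv61_c0, aux_kv61_c1, aux_kv61_c2, aux_kv61_c3, aux_kv61_c4, aux_kv61_c5, aux_kv61_c6, aux_kv62_c0, aux_kv62_c1, aux_kv62_c2, aux_kv62_c3, aux_kv62_c4, aux_kv62_c5, aux_kv62_c6, aux_kv63_c0, aux_kv63_c1, aux_kv63_c2, aux_kv63_c3, aux_kv63_c4, aux_kv63_c5, aux_kv63_c6] at e1 e2 e3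
    intro i; fin_cases i
    · have h : g 0 * e 6 ^ 2 = 0 := by
        linear_combination e1 + (0:ℝ) * hq' + (0:ℝ) * aux_s2
      exact (mul_eq_zero.mp h).resolve_right (pow_ne_zero _ hj)
    · have h : g 1 * e 6 ^ 2 = 0 := by
        linear_combination e2 + (0:ℝ) * hq' + (0:ℝ) * aux_s2
      exact (mul_eq_zero.mp h).resolve_right (pow_ne_zero _ hj)
    · have h : g 2 * e 6 ^ 2 = 0 := by
        linear_combination e3 + (0:ℝ) * hq' + (0:ℝ) * aux_s2
      exact (mul_eq_zero.mp h).resolve_right (pow_ne_zero _ hj)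
  have hKle : Submodule.span ℝ (Set.range ![aux_kv61 e, aux_kv62 e, aux_kv63 e]) ≤ KerSet e := by
    rw [Submodule.span_le]
    rintro x ⟨i, rfl⟩
    fin_cases i
    · exact aux_kv61_mem e hq
    · exact aux_kv62_mem e hq
    · exact aux_kv63_mem e hq
  have hleK : KerSet e ≤ Submodule.span ℝ (Set.range ![aux_kv61 e, aux_kv62 e, aux_kv63 e]) := by
    intro v hv
    rw [aux_mem_KerSet_iff] at hv
    obtain ⟨h0, h1, h2, h3, h4, h5, h6⟩ := hv
    have hc0 : (e 6 ^ 2) * v 0 = ((-1/2)*e 3*e 6*Real.sqrt 2 - e 1*e 4) * v 1 + (e 1 ^ 2) * v 4 + ((1/2)*e 1*e 3*Real.sqrt 2 + e 0*e 6) * v 6 := by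
      have h : (2*e 6 ^ 4) * ((e 6 ^ 2) * v 0 - (((-1/2)*e 3*e 6*Real.sqrt 2 - e 1*e 4) * v 1 + (e 1 ^ 2) * v 4 + ((1/2)*e 1*e 3*Real.sqrt 2 + e 0*e 6) * v 6)) = 0 := by
        linear_combination (0:ℝ) * h0 + (-e 1*e 6 ^ 4*Real.sqrt 2) * h2 + (0:ℝ) * h3 + (-e 6 ^ 5*Real.sqrt 2) * h5 + (0:ℝ) * hq' + (-e 6 ^ 6*v 0 - e 1*e 4*e 6 ^ 4*v 1 + e 1 ^ 2*e 6 ^ 4*v 4 + e 0*e 6 ^ 5*v 6) * aux_s2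
      rcases mul_eq_zero.mp h with h' | h'
      · exact absurd h' hD
      · linear_combination h'
    have hc2 : (e 6 ^ 2) * v 2 = (-e 5*e 6 + (-1/2)*e 3*e 4*Real.sqrt 2) * v 1 + ((1/2)*e 1*e 3*Real.sqrt 2 - e 0*e 6) * v 4 + (e 2*e 6 + e 1*e 5 + e 0*e 4) * v 6 := by
      have h : (2*e 6 ^ 4) * ((e 6 ^ 2) * v 2 - ((-e 5*e 6 + (-1/2)*e 3*e 4*Real.sqrt 2) * v 1 + ((1/2)*e 1*e 3*Real.sqrt 2 - e 0*e 6) * v 4 + (e 2*e 6 + e 1*e 5 + e 0*e 4) * v 6)) = 0 := by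
        linear_combination (e 1*e 6 ^ 4*Real.sqrt 2) * h0 + (0:ℝ) * h2 + (2*e 6 ^ 5) * h3 + (-e 4*e 6 ^ 4*Real.sqrt 2) * h5 + (0:ℝ) * hq' + (-e 4*e 6 ^ 5*v 0 - e 1*e 6 ^ 5*v 5 + e 1*e 5*e 6 ^ 4*v 6 + e 0*e 4*e 6 ^ 4*v 6) * aux_s2
      rcases mul_eq_zero.mp h with h' | h'
      · exact absurd h' hD
      · linear_combination h'
    have hc3 : (e 6 ^ 2) * v 3 = (-e 4*e 6*Real.sqrt 2) * v 1 + (e 1*e 6*Real.sqrt 2) * v 4 + (e 3*e 6) * v 6 := by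
      have h : (2*e 6 ^ 4) * ((e 6 ^ 2) * v 3 - ((-e 4*e 6*Real.sqrt 2) * v 1 + (e 1*e 6*Real.sqrt 2) * v 4 + (e 3*e 6) * v 6)) = 0 := by
        linear_combination (0:ℝ) * h0 + (-2*e 6 ^ 5) * h2 + (0:ℝ) * h3 + (0:ℝ) * h5 + (0:ℝ) * hq' + (0:ℝ) * aux_s2
      rcases mul_eq_zero.mp h with h' | h'
      · exact absurd h' hD
      · linear_combination h'
    have hc5 : (e 6 ^ 2) * v 5 = (e 4 ^ 2) * v 1 + ((1/2)*e 3*e 6*Real.sqrt 2 - e 1*e 4) * v 4 + (e 5*e 6 + (-1/2)*e 3*e 4*Real.sqrt 2) * v 6 := by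
      have h : (2*e 6 ^ 4) * ((e 6 ^ 2) * v 5 - ((e 4 ^ 2) * v 1 + ((1/2)*e 3*e 6*Real.sqrt 2 - e 1*e 4) * v 4 + (e 5*e 6 + (-1/2)*e 3*e 4*Real.sqrt 2) * v 6)) = 0 := by
        linear_combination (e 6 ^ 5*Real.sqrt 2) * h0 + (e 4*e 6 ^ 4*Real.sqrt 2) * h2 + (0:ℝ) * h3 + (0:ℝ) * h5 + (0:ℝ) * hq' + (-e 6 ^ 6*v 5 + e 5*e 6 ^ 5*v 6 + e 4 ^ 2*e 6 ^ 4*v 1 - e 1*e 4*e 6 ^ 4*v 4) * aux_s2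
      rcases mul_eq_zero.mp h with h' | h'
      · exact absurd h' hD
      · linear_combination h'
    have hveq : (e 6 ^ 2) • v = v 1 • aux_kv61 e + v 4 • aux_kv62 e + v 6 • aux_kv63 e := by
      funext i
      fin_cases i <;>
        simp only [Pi.add_apply, Pi.smul_apply, smul_eq_mul]
      · show (e 6 ^ 2) * v 0 = v 1 * aux_kv61 e 0 + v 4 * aux_kv62 e 0 + v 6 * aux_kv63 e 0
        rw [aux_kv61_c0, aux_kv62_c0, aux_kv63_c0]
        linear_combination hc0
      · show (e 6 ^ 2) * v 1 = v 1 * aux_kv61 e 1 + v 4 * aux_kv62 e 1 + v 6 * aux_kv63 e 1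
        rw [aux_kv61_c1, aux_kv62_c1, aux_kv63_c1]
        ring
      · show (e 6 ^ 2) * v 2 = v 1 * aux_kv61 e 2 + v 4 * aux_kv62 e 2 + v 6 * aux_kv63 e 2
        rw [aux_kv61_c2, aux_kv62_c2, aux_kv63_c2]
        linear_combination hc2
      · show (e 6 ^ 2) * v 3 = v 1 * aux_kv61 e 3 + v 4 * aux_kv62 e 3 + v 6 * aux_kv63 e 3
        rw [aux_kv61_c3, aux_kv62_c3, aux_kv63_c3]
        linear_combination hc3
      · show (e 6 ^ 2) * v 4 = v 1 * aux_kv61 e 4 + v 4 * aux_kv62 e 4 + v 6 * aux_kv63 e 4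
        rw [aux_kv61_c4, aux_kv62_c4, aux_kv63_c4]
        ring
      · show (e 6 ^ 2) * v 5 = v 1 * aux_kv61 e 5 + v 4 * aux_kv62 e 5 + v 6 * aux_kv63 e 5
        rw [aux_kv61_c5, aux_kv62_c5, aux_kv63_c5]
        linear_combination hc5
      · show (e 6 ^ 2) * v 6 = v 1 * aux_kv61 e 6 + v 4 * aux_kv62 e 6 + v 6 * aux_kv63 e 6
        rw [aux_kv61_c6, aux_kv62_c6, aux_kv63_c6]
        ring
    have hv2 : v = ((e 6 ^ 2))⁻¹ • (v 1 • aux_kv61 e + v 4 • aux_kv62 e + v 6 • aux_kv63 e) := by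
      rw [← hveq, smul_smul, inv_mul_cancel₀ hD0, one_smul]
    rw [hv2]
    refine Submodule.smul_mem _ _ (Submodule.add_mem _ (Submodule.add_mem _
      (Submodule.smul_mem _ _ ?_) (Submodule.smul_mem _ _ ?_)) (Submodule.smul_mem _ _ ?_))
    · exact Submodule.subset_span ⟨0, rfl⟩
    · exact Submodule.subset_span ⟨1, rfl⟩
    · exact Submodule.subset_span ⟨2, rfl⟩
  have hKeq : KerSet e = Submodule.span ℝ (Set.range ![aux_kv61 e, aux_kv62 e, aux_kv63 e]) :=
    le_antisymm hleK hKle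
  constructor
  · rw [hKeq, finrank_span_eq_card hli]; simp
  · intro x hx y hy
    rw [hKeq, Submodule.mem_span_range_iff_exists_fun] at hx hy
    obtain ⟨c, hc⟩ := hx
    obtain ⟨d, hd⟩ := hy
    rw [Fin.sum_univ_three] at hc hd
    simp only [Matrix.cons_val_zero, Matrix.cons_val_one, Matrix.head_cons, Matrix.cons_val_two, Matrix.tail_cons] at hc hd
    rw [← hc, ← hd]
    simp only [bform, Pi.add_apply, Pi.smul_apply, smul_eq_mul, aux_kv61_c0, aux_kv61_c1, aux_kv61_c2, aux_kv61_c3, aux_kv61_c4, aux_kv61_c5, aux_kv61_c6, aux_kv62_c0, aux_kv62_c1, aux_kv62_c2, aux_kv62_c3, aux_kv62_c4, aux_kv62_c5, aux_kv62_c6, aux_kv63_c0, aux_kv63_c1, aux_kv63_c2, aux_kv63_c3, aux_kv63_c4, aux_kv63_c5, aux_kv63_c6]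
    linear_combination (e 6 ^ 2*c 2*d 2) * hq' + (-e 4 ^ 2*e 6 ^ 2*c 0*d 0 + e 1*e 4*e 6 ^ 2*c 1*d 0 + e 1*e 4*e 6 ^ 2*c 0*d 1 - e 1 ^ 2*e 6 ^ 2*c 1*d 1) * aux_s2

/-- Lemma 2.2 (1): For an indecomposable subalgebra `h ⊆ g₂*` and a
1-dimensional `h`-invariant isotropic subspace `E`, the space
`Ê(E) = {v : v × e = 0 ∀ e ∈ E}` is a 3-dimensional isotropic `h`-invariant subspace
containing `E`. -/
theorem stmt3 (h : LieSubalgebra ℝ M7) (hg2 : ∀ X ∈ h, inG2 X)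
    (hind : IsIndecomposable h)
    (cross : V7 → V7 → V7)
    (hcross : ∀ u v w : V7, bform (cross u v) w = omega0 u v w)
    (E : Submodule ℝ V7) (hinv : InvariantUnder h E) (hiso : IsIsotropic E)
    (hdim : Module.finrank ℝ E = 1) :
    ∃ U : Submodule ℝ V7,
      (U : Set V7) = {v : V7 | ∀ e ∈ E, cross v e = 0} ∧
      Module.finrank ℝ U = 3 ∧ IsIsotropic U ∧ InvariantUnder h U ∧ E ≤ U := by
  obtain ⟨e₀, he₀E, he₀0, hEspan⟩ : ∃ v ∈ E, v ≠ 0 ∧ E = Submodule.span ℝ {v} := by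
    have hbot : E ≠ ⊥ := by
      intro hE; rw [hE] at hdim; simp [finrank_bot] at hdim
    obtain ⟨v, hv, hv0⟩ := Submodule.exists_mem_ne_zero_of_ne_bot hbot
    refine ⟨v, hv, hv0, ?_⟩
    have hle : Submodule.span ℝ {v} ≤ E := by simpa [Submodule.span_le]
    refine (Submodule.eq_of_le_of_finrank_le hle ?_).symm
    rw [hdim, finrank_span_singleton hv0]
  have hq : bform e₀ e₀ = 0 := hiso e₀ he₀E e₀ he₀E
  have hcz : ∀ a b : V7, (∀ w, omega0 a b w = 0) → cross a b = 0 := by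
    intro a b hw
    apply aux_bform_nondeg
    intro w; rw [hcross]; exact hw w
  have hcz' : ∀ a b : V7, cross a b = 0 → ∀ w, omega0 a b w = 0 := by
    intro a b hab w
    rw [← hcross, hab]; simp [bform]
  have hchar : ∀ v : V7, v ∈ KerSet e₀ ↔ ∀ e ∈ E, cross v e = 0 := by
    intro v
    constructor
    · intro hv e heE
      have hv' := (aux_mem_KerSet v e₀).mp hv
      have h1 : cross v e₀ = 0 := by
        apply hcz
        intro w
        rw [aux_omega_expand v e₀ w, hv' 0, hv' 1, hv' 2, hv' 3, hv' 4, hv' 5, hv' 6]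
        ring
      obtain ⟨c, rfl⟩ := Submodule.mem_span_singleton.mp (by rw [← hEspan]; exact heE)
      apply hcz
      intro w
      rw [aux_omega0_smul2, hcz' v e₀ h1 w, mul_zero]
    · intro hv
      rw [aux_mem_KerSet]
      intro i
      rw [← hcross, hv e₀ he₀E]
      simp [bform]
  have hq' : e₀ 0 * e₀ 4 + e₀ 4 * e₀ 0 + e₀ 1 * e₀ 5 + e₀ 5 * e₀ 1 + e₀ 2 * e₀ 6
      + e₀ 6 * e₀ 2 - e₀ 3 * e₀ 3 = 0 := hq
  have hmain : Module.finrank ℝ (KerSet e₀) = 3 ∧ IsIsotropic (KerSet e₀) := by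
    by_cases h0 : e₀ 0 ≠ 0
    · exact aux_case0 e₀ hq h0
    by_cases h1 : e₀ 1 ≠ 0
    · exact aux_case1 e₀ hq h1
    by_cases h2 : e₀ 2 ≠ 0
    · exact aux_case2 e₀ hq h2
    by_cases h4 : e₀ 4 ≠ 0
    · exact aux_case4 e₀ hq h4
    by_cases h5 : e₀ 5 ≠ 0
    · exact aux_case5 e₀ hq h5
    by_cases h6 : e₀ 6 ≠ 0
    · exact aux_case6 e₀ hq h6
    exfalso
    push_neg at h0 h1 h2 h4 h5 h6
    have h33 : e₀ 3 * e₀ 3 = 0 := by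
      linear_combination -hq' + 2 * e₀ 4 * h0 + 2 * e₀ 5 * h1 + 2 * e₀ 6 * h2
    have h3 : e₀ 3 = 0 := mul_self_eq_zero.mp h33
    refine he₀0 (funext fun i => ?_)
    fin_cases i
    exacts [h0, h1, h2, h3, h4, h5, h6]
  refine ⟨KerSet e₀, ?_, hmain.1, hmain.2, ?_, ?_⟩
  · ext v
    simp only [SetLike.mem_coe, Set.mem_setOf_eq]
    exact hchar v
  · intro X hX v hv
    rw [hchar]
    intro e heE
    have hv' := (hchar v).mp hv
    apply hcz
    intro w
    have hG := hg2 X hX v e w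
    have ha : omega0 v (X.mulVec e) w = 0 := by
      rw [← hcross, hv' (X.mulVec e) (hinv X hX e heE)]; simp [bform]
    have hb : omega0 v e (X.mulVec w) = 0 := by
      rw [← hcross, hv' e heE]; simp [bform]
    linarith
  · intro v hvE
    obtain ⟨c, rfl⟩ := Submodule.mem_span_singleton.mp (by rw [← hEspan]; exact hvE)
    rw [aux_mem_KerSet]
    intro i
    rw [aux_omega0_smul1, aux_omega0_alt, mul_zero]
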